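/- arXiv:1710.09173 — 8 statements merged into one kernel-verified Lean document; each statement's English description precedes it below -/
import Mathlib

section
/- For every real s > 1/2 there exists a constant c_s > 0 such that for all x, y ∈ ℓ²_s the convolution x⋆y belongs to ℓ²_s and ‖x⋆y‖_s ≤ c_s ‖x‖_s ‖y‖_s. -/
open MeasureTheory ENNReal

private lemma sq_rpow_half (a : ℝ≥0∞) : (a ^ (1/2:ℝ)) ^ 2 = a := by
  rw [← ENNReal.rpow_natCast (a ^ (1/2:ℝ)) 2, ← ENNReal.rpow_mul]; norm_num

private lemma cs_ennreal (f g : ℤ → ℝ≥0∞) :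
    (∑' i, f i * g i) ^ 2 ≤ (∑' i, f i ^ 2) * (∑' i, g i ^ 2) := by
  have hpq : Real.HolderConjugate 2 2 := Real.holderConjugate_iff.mpr ⟨one_lt_two, by norm_num⟩
  have h := ENNReal.lintegral_mul_le_Lp_mul_Lq (Measure.count (α := ℤ)) hpq
    (measurable_of_countable f).aemeasurable (measurable_of_countable g).aemeasurable
  simp only [Pi.mul_apply, lintegral_count] at h
  have e1 : ∀ h : ℤ → ℝ≥0∞, (∑' i, h i ^ (2:ℝ)) = ∑' i, h i ^ 2 := by
    intro h; congr 1; funext i; rw [← ENNReal.rpow_natCast]; norm_num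
  have h2 : (∑' i, f i * g i) ^ 2 ≤
      ((∑' i, f i ^ (2:ℝ)) ^ (1/2:ℝ) * (∑' i, g i ^ (2:ℝ)) ^ (1/2:ℝ)) ^ 2 :=
    pow_le_pow_left₀ zero_le h 2
  calc (∑' i, f i * g i) ^ 2 ≤ _ := h2
    _ = (∑' i, f i ^ 2) * (∑' i, g i ^ 2) := by
        rw [mul_pow, sq_rpow_half, sq_rpow_half, e1, e1]

private lemma peetre_aux (s : ℝ) (hs : 0 ≤ s) (i j : ℤ) :
    (1 + ((i + j : ℤ) : ℝ) ^ 2) ^ (s/2) ≤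
      2 ^ s * ((1 + (i:ℝ) ^ 2) ^ (s/2) + (1 + (j:ℝ) ^ 2) ^ (s/2)) := by
  have h4 : (4:ℝ) ^ (s/2) = 2 ^ s := by
    rw [show (4:ℝ) = 2 ^ (2:ℝ) by norm_num [← Real.rpow_natCast 2 2], ← Real.rpow_mul (by norm_num)]
    ring_nf
  have key : ∀ a b : ℤ, (b:ℝ)^2 ≤ (a:ℝ)^2 →
      (1 + ((a:ℝ) + (b:ℝ)) ^ 2) ^ (s/2) ≤ 2 ^ s * (1 + (a:ℝ) ^ 2) ^ (s/2) := by
    intro a b hab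
    have h1 : 1 + ((a:ℝ) + (b:ℝ)) ^ 2 ≤ 4 * (1 + (a:ℝ) ^ 2) := by
      nlinarith [sq_nonneg ((a:ℝ) - (b:ℝ))]
    calc (1 + ((a:ℝ) + (b:ℝ)) ^ 2) ^ (s/2) ≤ (4 * (1 + (a:ℝ) ^ 2)) ^ (s/2) :=
          Real.rpow_le_rpow (by positivity) h1 (by linarith)
      _ = 2 ^ s * (1 + (a:ℝ) ^ 2) ^ (s/2) := by
          rw [Real.mul_rpow (by norm_num) (by positivity), h4]
  push_cast
  rcases le_total ((j:ℝ)^2) ((i:ℝ)^2) with h | h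
  · refine (key i j h).trans ?_
    have h1 : (0:ℝ) ≤ (1 + (j:ℝ)^2) ^ (s/2) := by positivity
    have h2 : (0:ℝ) ≤ (2:ℝ)^s := by positivity
    nlinarith
  · have h0 := key j i h
    rw [add_comm ((i:ℝ)) ((j:ℝ))]
    refine h0.trans ?_
    have h1 : (0:ℝ) ≤ (1 + (i:ℝ)^2) ^ (s/2) := by positivity
    have h2 : (0:ℝ) ≤ (2:ℝ)^s := by positivity
    nlinarith

private lemma summable_weight_aux (s : ℝ) (hs : 1/2 < s) :
    Summable (fun k : ℤ => (1 + (k:ℝ) ^ 2) ^ (-s)) := by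
  have h1 : Summable (fun k : ℤ => 1 / |(k:ℝ)| ^ (2*s)) := by
    simpa using (Real.summable_one_div_int_add_rpow 0 (2*s)).mpr (by linarith)
  have h2 : Summable (fun k : ℤ => if k = 0 then (1:ℝ) else 0) :=
    summable_of_ne_finset_zero (s := {0}) (by intro b hb; simp_all)
  refine Summable.of_nonneg_of_le (fun k => by positivity) (fun k => ?_) (h1.add h2)
  rcases eq_or_ne k 0 with rfl | hk
  · show ((1:ℝ) + ((0:ℤ):ℝ) ^ 2) ^ (-s) ≤ 1 / |((0:ℤ):ℝ)| ^ (2*s) + if (0:ℤ) = 0 then (1:ℝ) else 0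
    simp only [if_pos rfl, Int.cast_zero]
    have h0 : ((1:ℝ) + 0 ^ 2) ^ (-s) = 1 := by norm_num
    rw [h0]
    have h3 : (0:ℝ) ≤ 1 / |(0:ℝ)| ^ (2*s) := by positivity
    simp only [if_true]
    linarith
  · have hk1 : (1:ℝ) ≤ |(k:ℝ)| := by
      rw [← Int.cast_abs]; exact_mod_cast Int.one_le_abs (by simpa using hk)
    have hle : |(k:ℝ)| ^ (2*s) ≤ (1 + (k:ℝ)^2) ^ s := by
      have he : ((k:ℝ)^2) ^ s = |(k:ℝ)| ^ (2*s) := by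
        rw [← sq_abs, ← Real.rpow_natCast |(k:ℝ)| 2, ← Real.rpow_mul (abs_nonneg _)]
        norm_num
      rw [← he]
      exact Real.rpow_le_rpow (by positivity) (by linarith) (by linarith)
    simp only [hk, if_false, add_zero, one_div]
    rw [Real.rpow_neg (by positivity)]
    exact inv_anti₀ (by positivity) hle


private lemma rpow_half_sq (a : ℝ≥0∞) : (a ^ 2) ^ (1/2:ℝ) = a := by
  rw [← ENNReal.rpow_natCast a 2, ← ENNReal.rpow_mul]; norm_num

private lemma sq_add_le (a b : ℝ≥0∞) : (a + b) ^ 2 ≤ 4 * (a ^ 2 + b ^ 2) := by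
  rcases le_total a b with h | h
  · calc (a+b)^2 ≤ (b+b)^2 := by gcongr
      _ = 4 * b^2 := by ring
      _ ≤ 4 * (a^2+b^2) := by gcongr; exact le_add_self
  · calc (a+b)^2 ≤ (a+a)^2 := by gcongr
      _ = 4 * a^2 := by ring
      _ ≤ 4 * (a^2+b^2) := by gcongr; exact le_self_add

private lemma young_step (a v : ℤ → ℝ≥0∞) :
    ∑' l, (∑' i, a i * v (l - i)) ^ 2 ≤ (∑' j, v j) ^ 2 * ∑' i, a i ^ 2 := by
  have key : ∀ l : ℤ, (∑' i, a i * v (l-i)) ^ 2 ≤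
      (∑' j, v j) * (∑' i, a i ^ 2 * v (l-i)) := by
    intro l
    calc (∑' i, a i * v (l-i)) ^ 2
        = (∑' i, (a i * (v (l-i)) ^ (1/2:ℝ)) * (v (l-i)) ^ (1/2:ℝ)) ^ 2 := by
          congr 1; exact tsum_congr fun i => by rw [mul_assoc, ← sq, sq_rpow_half]
      _ ≤ (∑' i, (a i * (v (l-i)) ^ (1/2:ℝ)) ^ 2) * (∑' i, ((v (l-i)) ^ (1/2:ℝ)) ^ 2) :=
          cs_ennreal _ _
      _ = (∑' i, a i ^ 2 * v (l-i)) * (∑' i, v (l-i)) := by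
          simp only [mul_pow, sq_rpow_half]
      _ = (∑' j, v j) * (∑' i, a i ^ 2 * v (l-i)) := by
          rw [mul_comm]
          congr 1
          exact (Equiv.subLeft l).tsum_eq v
  calc ∑' l, (∑' i, a i * v (l-i)) ^ 2
      ≤ ∑' l, (∑' j, v j) * (∑' i, a i ^ 2 * v (l-i)) := ENNReal.tsum_le_tsum key
    _ = (∑' j, v j) * ∑' l, ∑' i, a i ^ 2 * v (l-i) := ENNReal.tsum_mul_left
    _ = (∑' j, v j) * ∑' i, ∑' l, a i ^ 2 * v (l-i) := by rw [ENNReal.tsum_comm]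
    _ = (∑' j, v j) * ∑' i, a i ^ 2 * ∑' l, v (l-i) := by
        congr 1; exact tsum_congr fun i => ENNReal.tsum_mul_left
    _ = (∑' j, v j) ^ 2 * ∑' i, a i ^ 2 := by
        have hv : ∀ i : ℤ, (∑' l, v (l - i)) = ∑' j, v j := fun i => (Equiv.subRight i).tsum_eq v
        simp only [hv, ENNReal.tsum_mul_right]
        ring

private lemma summable_of_tsum_ofReal_ne_top {f : ℤ → ℝ} (hf : ∀ i, 0 ≤ f i)
    (h : (∑' i, ENNReal.ofReal (f i)) ≠ ⊤) : Summable f := by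
  have h2 : Summable (fun i => (f i).toNNReal) :=
    ENNReal.tsum_coe_ne_top_iff_summable.mp (by simpa [ENNReal.ofReal] using h)
  exact (NNReal.summable_coe.mpr h2).congr (fun i => Real.coe_toNNReal _ (hf i))

/-- For every real `s > 1/2` there exists `c_s > 0` such that for all
`x, y ∈ ℓ²_s` the convolution `x ⋆ y` belongs to `ℓ²_s` and `‖x ⋆ y‖_s ≤ c_s ‖x‖_s ‖y‖_s`.
Here `‖x‖_s² = ∑_{k ∈ ℤ} (1 + |k|²)^s ‖x k‖²` and `(x ⋆ y)_ℓ = ∑_{i + j = ℓ} x_i y_j`. -/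
theorem convolution_algebra_weighted_l2 (s : ℝ) (hs : 1 / 2 < s) :
    ∃ c : ℝ, 0 < c ∧ ∀ x y : ℤ → ℂ,
      Summable (fun k : ℤ => (1 + (k : ℝ) ^ 2) ^ s * ‖x k‖ ^ 2) →
      Summable (fun k : ℤ => (1 + (k : ℝ) ^ 2) ^ s * ‖y k‖ ^ 2) →
      (∀ l : ℤ, Summable (fun i : ℤ => x i * y (l - i))) ∧
      Summable (fun l : ℤ => (1 + (l : ℝ) ^ 2) ^ s * ‖∑' i : ℤ, x i * y (l - i)‖ ^ 2) ∧
      Real.sqrt (∑' l : ℤ, (1 + (l : ℝ) ^ 2) ^ s * ‖∑' i : ℤ, x i * y (l - i)‖ ^ 2) ≤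
        c * Real.sqrt (∑' k : ℤ, (1 + (k : ℝ) ^ 2) ^ s * ‖x k‖ ^ 2) *
          Real.sqrt (∑' k : ℤ, (1 + (k : ℝ) ^ 2) ^ s * ‖y k‖ ^ 2) := by
  have hs0 : (0:ℝ) < s := by linarith
  set C1 : ℝ := ∑' k : ℤ, (1 + (k:ℝ) ^ 2) ^ (-s) with hC1def
  have hC1sum := summable_weight_aux s hs
  have hC1nonneg : 0 ≤ C1 := tsum_nonneg (fun k => by positivity)
  set K : ℝ := 8 * ((2:ℝ) ^ s) ^ 2 * C1 with hKdef
  have hKnonneg : 0 ≤ K := by positivity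
  refine ⟨Real.sqrt K + 1, by positivity, ?_⟩
  intro x y hx hy
  set W : ℤ → ℝ≥0∞ := fun k => ENNReal.ofReal ((1 + (k:ℝ) ^ 2) ^ (s/2)) with hWdef
  set X : ℤ → ℝ≥0∞ := fun k => ENNReal.ofReal ‖x k‖ with hXdef
  set Y : ℤ → ℝ≥0∞ := fun k => ENNReal.ofReal ‖y k‖ with hYdef
  have hw2 : ∀ k : ℤ, ((1 + (k:ℝ) ^ 2) ^ (s/2)) ^ 2 = (1 + (k:ℝ) ^ 2) ^ s := by
    intro k
    rw [← Real.rpow_natCast ((1 + (k:ℝ)^2) ^ (s/2)) 2, ← Real.rpow_mul (by positivity)]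
    norm_num
  have hWne0 : ∀ k, W k ≠ 0 := fun k => (ENNReal.ofReal_pos.mpr (by positivity)).ne'
  have hWtop : ∀ k, W k ≠ ⊤ := fun k => ENNReal.ofReal_ne_top
  have hW1 : ∀ k, 1 ≤ W k := by
    intro k
    rw [hWdef]
    exact le_trans (by norm_num) (ENNReal.ofReal_le_ofReal
      (Real.one_le_rpow (by nlinarith [sq_nonneg ((k:ℝ))]) (by linarith)))
  -- squared-weight identities
  have hWXsq : ∀ k, W k ^ 2 * X k ^ 2 = ENNReal.ofReal ((1 + (k:ℝ)^2) ^ s * ‖x k‖ ^ 2) := by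
    intro k
    rw [hWdef, hXdef, ← ENNReal.ofReal_pow (by positivity), ← ENNReal.ofReal_pow (norm_nonneg _),
      ← ENNReal.ofReal_mul (by positivity), hw2]
  have hWYsq : ∀ k, W k ^ 2 * Y k ^ 2 = ENNReal.ofReal ((1 + (k:ℝ)^2) ^ s * ‖y k‖ ^ 2) := by
    intro k
    rw [hWdef, hYdef, ← ENNReal.ofReal_pow (by positivity), ← ENNReal.ofReal_pow (norm_nonneg _),
      ← ENNReal.ofReal_mul (by positivity), hw2]
  set Ar : ℝ := ∑' k : ℤ, (1 + (k:ℝ) ^ 2) ^ s * ‖x k‖ ^ 2 with hArdef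
  set Br : ℝ := ∑' k : ℤ, (1 + (k:ℝ) ^ 2) ^ s * ‖y k‖ ^ 2 with hBrdef
  have hArnn : 0 ≤ Ar := tsum_nonneg (fun k => by positivity)
  have hBrnn : 0 ≤ Br := tsum_nonneg (fun k => by positivity)
  have hA : (∑' k, W k ^ 2 * X k ^ 2) = ENNReal.ofReal Ar := by
    rw [hArdef, ENNReal.ofReal_tsum_of_nonneg (fun k => by positivity) hx]
    exact tsum_congr hWXsq
  have hB : (∑' k, W k ^ 2 * Y k ^ 2) = ENNReal.ofReal Br := by
    rw [hBrdef, ENNReal.ofReal_tsum_of_nonneg (fun k => by positivity) hy]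
    exact tsum_congr hWYsq
  have hAne : (∑' k, W k ^ 2 * X k ^ 2) ≠ ⊤ := by rw [hA]; exact ENNReal.ofReal_ne_top
  have hBne : (∑' k, W k ^ 2 * Y k ^ 2) ≠ ⊤ := by rw [hB]; exact ENNReal.ofReal_ne_top
  -- inverse-weight sum
  have hWinv : ∀ k, (W k)⁻¹ ^ 2 = ENNReal.ofReal ((1 + (k:ℝ)^2) ^ (-s)) := by
    intro k
    rw [hWdef, ← ENNReal.ofReal_inv_of_pos (by positivity),
      ← ENNReal.ofReal_pow (by positivity)]
    congr 1
    rw [inv_pow, hw2, ← Real.rpow_neg (by positivity)]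
  have hC1e : (∑' k, (W k)⁻¹ ^ 2) = ENNReal.ofReal C1 := by
    rw [hC1def, ENNReal.ofReal_tsum_of_nonneg (fun k => by positivity) hC1sum]
    exact tsum_congr hWinv
  -- ℓ¹ bound from Cauchy–Schwarz
  have l1bound : ∀ Z : ℤ → ℝ≥0∞,
      (∑' i, Z i) ^ 2 ≤ ENNReal.ofReal C1 * ∑' k, W k ^ 2 * Z k ^ 2 := by
    intro Z
    calc (∑' i, Z i) ^ 2 = (∑' i, (W i)⁻¹ * (W i * Z i)) ^ 2 := by
          congr 1
          exact tsum_congr fun i => by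
            rw [← mul_assoc, ENNReal.inv_mul_cancel (hWne0 i) (hWtop i), one_mul]
      _ ≤ (∑' i, (W i)⁻¹ ^ 2) * (∑' i, (W i * Z i) ^ 2) := cs_ennreal _ _
      _ = ENNReal.ofReal C1 * ∑' k, W k ^ 2 * Z k ^ 2 := by
          rw [hC1e]
          congr 1
          exact tsum_congr fun k => by ring
  have hXl1 : (∑' i, X i) ≠ ⊤ := by
    intro htop
    have h := l1bound X
    rw [htop] at h
    rw [ENNReal.top_pow (by norm_num)] at h
    exact ENNReal.mul_ne_top ENNReal.ofReal_ne_top hAne (top_le_iff.mp h)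
  -- pointwise boundedness of Y
  have hYbdd : ∀ j, Y j ≤ (ENNReal.ofReal Br) ^ (1/2:ℝ) := by
    intro j
    have h1 : Y j ^ 2 ≤ ENNReal.ofReal Br := by
      rw [← hB]
      refine le_trans ?_ (ENNReal.le_tsum j)
      calc Y j ^ 2 = 1 * Y j ^ 2 := (one_mul _).symm
        _ ≤ W j ^ 2 * Y j ^ 2 := by gcongr; exact one_le_pow_of_one_le' (hW1 j) 2
    calc Y j = (Y j ^ 2) ^ (1/2:ℝ) := (rpow_half_sq _).symm
      _ ≤ (ENNReal.ofReal Br) ^ (1/2:ℝ) := ENNReal.rpow_le_rpow h1 (by norm_num)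
  -- Part 1: summability of the convolution terms
  have habs : ∀ l : ℤ, Summable (fun i : ℤ => ‖x i * y (l - i)‖) := by
    intro l
    refine summable_of_tsum_ofReal_ne_top (fun i => norm_nonneg _) ?_
    have he : ∀ i : ℤ, ENNReal.ofReal ‖x i * y (l - i)‖ = X i * Y (l - i) := by
      intro i
      rw [norm_mul, ENNReal.ofReal_mul (norm_nonneg _), hXdef, hYdef]
    rw [tsum_congr he]
    have : (∑' i, X i * Y (l - i)) ≤ (ENNReal.ofReal Br) ^ (1/2:ℝ) * ∑' i, X i := by
      rw [← ENNReal.tsum_mul_left]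
      exact ENNReal.tsum_le_tsum fun i => by
        rw [mul_comm (ENNReal.ofReal Br ^ (1/2:ℝ)) (X i)]
        exact mul_le_mul_right (hYbdd (l - i)) (X i)
    exact ne_top_of_le_ne_top (ENNReal.mul_ne_top
      (ENNReal.rpow_ne_top_of_nonneg (by norm_num) ENNReal.ofReal_ne_top) hXl1) this
  have hconv : ∀ l : ℤ, Summable (fun i : ℤ => x i * y (l - i)) :=
    fun l => (habs l).of_norm
  refine ⟨hconv, ?_⟩
  -- ENNReal-side main estimate
  set T : ℤ → ℝ≥0∞ := fun l => ∑' i, X i * Y (l - i) with hTdef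
  have hT : ∀ l, ENNReal.ofReal ‖∑' i : ℤ, x i * y (l - i)‖ ≤ T l := by
    intro l
    refine le_trans (ENNReal.ofReal_le_ofReal (norm_tsum_le_tsum_norm (habs l))) ?_
    rw [ENNReal.ofReal_tsum_of_nonneg (fun i => norm_nonneg _) (habs l)]
    refine le_of_eq (tsum_congr fun i => ?_)
    rw [norm_mul, ENNReal.ofReal_mul (norm_nonneg _), hXdef, hYdef]
  set E : ℝ≥0∞ := ENNReal.ofReal ((2:ℝ) ^ s) with hEdef
  set P : ℤ → ℝ≥0∞ := fun l => ∑' i, (W i * X i) * Y (l - i) with hPdef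
  set Q : ℤ → ℝ≥0∞ := fun l => ∑' i, (W i * Y i) * X (l - i) with hQdef
  have keyl : ∀ l, W l * T l ≤ E * (P l + Q l) := by
    intro l
    have step : ∀ i : ℤ, W l * (X i * Y (l - i)) ≤
        E * ((W i * X i) * Y (l - i) + X i * (W (l - i) * Y (l - i))) := by
      intro i
      have hWl : W l ≤ E * (W i + W (l - i)) := by
        have hp := peetre_aux s (le_of_lt hs0) i (l - i)
        rw [show i + (l - i) = l by omega] at hp
        rw [hWdef, hEdef]
        calc ENNReal.ofReal ((1 + (l:ℝ)^2) ^ (s/2)) ≤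
            ENNReal.ofReal ((2:ℝ)^s * ((1 + (i:ℝ)^2) ^ (s/2) + (1 + ((l-i:ℤ):ℝ)^2) ^ (s/2))) :=
              ENNReal.ofReal_le_ofReal hp
          _ = ENNReal.ofReal ((2:ℝ)^s) * (ENNReal.ofReal ((1 + (i:ℝ)^2) ^ (s/2)) +
              ENNReal.ofReal ((1 + ((l-i:ℤ):ℝ)^2) ^ (s/2))) := by
              rw [ENNReal.ofReal_mul (by positivity), ENNReal.ofReal_add (by positivity) (by positivity)]
      calc W l * (X i * Y (l - i)) ≤ (E * (W i + W (l - i))) * (X i * Y (l - i)) :=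
            mul_le_mul_left hWl _
        _ = E * ((W i * X i) * Y (l - i) + X i * (W (l - i) * Y (l - i))) := by ring
    calc W l * T l = ∑' i, W l * (X i * Y (l - i)) := ENNReal.tsum_mul_left.symm
      _ ≤ ∑' i, E * ((W i * X i) * Y (l - i) + X i * (W (l - i) * Y (l - i))) :=
          ENNReal.tsum_le_tsum step
      _ = E * (P l + Q l) := by
          have e2 : (∑' i : ℤ, X i * (W (l - i) * Y (l - i))) = Q l := by
            have h3 := (Equiv.subLeft l).tsum_eq (fun j => (W j * Y j) * X (l - j))
            rw [show Q l = ∑' j : ℤ, (W j * Y j) * X (l - j) from rfl, ← h3]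
            exact tsum_congr fun i => by
              simp only [Equiv.subLeft_apply, _root_.sub_sub_cancel]
              ring
          rw [ENNReal.tsum_mul_left, ENNReal.tsum_add, e2]
  -- sum of squares bounds
  have hPsum : (∑' l, P l ^ 2) ≤ ENNReal.ofReal C1 * ENNReal.ofReal Br * ENNReal.ofReal Ar := by
    calc (∑' l, P l ^ 2) ≤ (∑' j, Y j) ^ 2 * ∑' i, (W i * X i) ^ 2 :=
          young_step (fun i => W i * X i) Y
      _ ≤ (ENNReal.ofReal C1 * ∑' k, W k ^ 2 * Y k ^ 2) * ∑' i, (W i * X i) ^ 2 :=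
          mul_le_mul_left (l1bound Y) _
      _ = ENNReal.ofReal C1 * ENNReal.ofReal Br * ENNReal.ofReal Ar := by
          rw [hB, ← hA]
          congr 1
          exact tsum_congr fun i => by ring
  have hQsum : (∑' l, Q l ^ 2) ≤ ENNReal.ofReal C1 * ENNReal.ofReal Br * ENNReal.ofReal Ar := by
    calc (∑' l, Q l ^ 2) ≤ (∑' j, X j) ^ 2 * ∑' i, (W i * Y i) ^ 2 :=
          young_step (fun i => W i * Y i) X
      _ ≤ (ENNReal.ofReal C1 * ∑' k, W k ^ 2 * X k ^ 2) * ∑' i, (W i * Y i) ^ 2 :=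
          mul_le_mul_left (l1bound X) _
      _ = ENNReal.ofReal C1 * ENNReal.ofReal Br * ENNReal.ofReal Ar := by
          rw [hA, ← hB]
          rw [show (∑' i, (W i * Y i) ^ 2) = ∑' k, W k ^ 2 * Y k ^ 2 from
            tsum_congr fun i => by ring]
          ring
  have hL : (∑' l, W l ^ 2 * (ENNReal.ofReal ‖∑' i : ℤ, x i * y (l - i)‖) ^ 2) ≤
      ENNReal.ofReal K * (ENNReal.ofReal Ar * ENNReal.ofReal Br) := by
    have hterm : ∀ l, W l ^ 2 * (ENNReal.ofReal ‖∑' i : ℤ, x i * y (l - i)‖) ^ 2 ≤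
        E ^ 2 * (4 * (P l ^ 2 + Q l ^ 2)) := by
      intro l
      calc W l ^ 2 * (ENNReal.ofReal ‖∑' i : ℤ, x i * y (l - i)‖) ^ 2
          ≤ W l ^ 2 * T l ^ 2 := by gcongr; exact hT l
        _ = (W l * T l) ^ 2 := (mul_pow _ _ _).symm
        _ ≤ (E * (P l + Q l)) ^ 2 := pow_le_pow_left₀ zero_le (keyl l) 2
        _ = E ^ 2 * (P l + Q l) ^ 2 := mul_pow _ _ _
        _ ≤ E ^ 2 * (4 * (P l ^ 2 + Q l ^ 2)) := mul_le_mul_right (sq_add_le _ _) _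
    calc (∑' l, W l ^ 2 * (ENNReal.ofReal ‖∑' i : ℤ, x i * y (l - i)‖) ^ 2)
        ≤ ∑' l, E ^ 2 * (4 * (P l ^ 2 + Q l ^ 2)) := ENNReal.tsum_le_tsum hterm
      _ = E ^ 2 * 4 * ((∑' l, P l ^ 2) + (∑' l, Q l ^ 2)) := by
          rw [show (fun l => E ^ 2 * (4 * (P l ^ 2 + Q l ^ 2))) =
            (fun l => (E ^ 2 * 4) * (P l ^ 2 + Q l ^ 2)) from funext fun l => by ring,
            ENNReal.tsum_mul_left, ENNReal.tsum_add]
      _ ≤ E ^ 2 * 4 * (ENNReal.ofReal C1 * ENNReal.ofReal Br * ENNReal.ofReal Ar +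
            ENNReal.ofReal C1 * ENNReal.ofReal Br * ENNReal.ofReal Ar) :=
          mul_le_mul_right (add_le_add hPsum hQsum) _
      _ = (8 * E ^ 2 * ENNReal.ofReal C1) * (ENNReal.ofReal Ar * ENNReal.ofReal Br) := by ring
      _ = ENNReal.ofReal K * (ENNReal.ofReal Ar * ENNReal.ofReal Br) := by
          congr 1
          rw [hKdef, hEdef, ENNReal.ofReal_mul (by positivity), ENNReal.ofReal_mul (by norm_num),
            ENNReal.ofReal_pow (by positivity), ENNReal.ofReal_ofNat]
  -- Part 2: summability
  have hofReal : ∀ l : ℤ, ENNReal.ofReal ((1 + (l:ℝ)^2) ^ s * ‖∑' i : ℤ, x i * y (l - i)‖ ^ 2) =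
      W l ^ 2 * (ENNReal.ofReal ‖∑' i : ℤ, x i * y (l - i)‖) ^ 2 := by
    intro l
    rw [hWdef, ← ENNReal.ofReal_pow (by positivity), ← ENNReal.ofReal_pow (norm_nonneg _),
      ← ENNReal.ofReal_mul (by positivity), hw2]
  have hsum2 : Summable (fun l : ℤ => (1 + (l:ℝ)^2) ^ s * ‖∑' i : ℤ, x i * y (l - i)‖ ^ 2) := by
    refine summable_of_tsum_ofReal_ne_top (fun l => by positivity) ?_
    rw [tsum_congr hofReal]
    exact ne_top_of_le_ne_top (ENNReal.mul_ne_top ENNReal.ofReal_ne_top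
      (ENNReal.mul_ne_top ENNReal.ofReal_ne_top ENNReal.ofReal_ne_top)) hL
  refine ⟨hsum2, ?_⟩
  -- Part 3: the norm inequality
  have hreal : (∑' l : ℤ, (1 + (l:ℝ)^2) ^ s * ‖∑' i : ℤ, x i * y (l - i)‖ ^ 2) ≤ K * (Ar * Br) := by
    rw [← ENNReal.ofReal_le_ofReal_iff (by positivity),
      ENNReal.ofReal_tsum_of_nonneg (fun l => by positivity) hsum2, tsum_congr hofReal,
      ENNReal.ofReal_mul hKnonneg, ENNReal.ofReal_mul hArnn]
    exact hL
  calc Real.sqrt (∑' l : ℤ, (1 + (l:ℝ)^2) ^ s * ‖∑' i : ℤ, x i * y (l - i)‖ ^ 2)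
      ≤ Real.sqrt (K * (Ar * Br)) := Real.sqrt_le_sqrt hreal
    _ = Real.sqrt K * (Real.sqrt Ar * Real.sqrt Br) := by
        rw [Real.sqrt_mul hKnonneg, Real.sqrt_mul hArnn]
    _ ≤ (Real.sqrt K + 1) * Real.sqrt Ar * Real.sqrt Br := by
        rw [mul_assoc (Real.sqrt K + 1)]
        have : (0:ℝ) ≤ Real.sqrt Ar * Real.sqrt Br := by positivity
        nlinarith [Real.sqrt_nonneg K]
end

section
/- Let s > 1/2 and M ≥ 0, and let c : ℤ⁴ → ℂ satisfy c(i,j,k,ℓ) = 0 whenever i + j ≠ k + ℓ and |c(i,j,k,ℓ)| ≤ M for all (i,j,k,ℓ). There exists a constant C_s > 0, depending only on s, such that for all a, b, a', b' ∈ ℓ²_s: for every ℓ ∈ ℤ the sum w_ℓ = Σ_{(i,j,k): i+j=k+ℓ} c(i,j,k,ℓ) a_i b_j a'_k converges absolutely, the sequence w = (w_ℓ)_{ℓ∈ℤ} belongs to ℓ²_s, and ‖w‖_s ≤ C_s M ‖a‖_s ‖b‖_s ‖a'‖_s. (This is the key estimate showing that the Hamiltonian vector field of a quartic polynomial with bounded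 coefficients and zero momentum is an analytic cubic map of ℓ²_s.) -/
open scoped ENNReal NNReal
open MeasureTheory

namespace QVB

lemma sqrt_sq (x : ℝ≥0∞) : (x ^ (1/2 : ℝ)) ^ 2 = x := by
  rw [← ENNReal.rpow_natCast (x ^ (1/2:ℝ)) 2, ← ENNReal.rpow_mul]
  norm_num

lemma sq_sqrt (x : ℝ≥0∞) : (x ^ 2) ^ (1/2 : ℝ) = x := by
  rw [← ENNReal.rpow_natCast x 2, ← ENNReal.rpow_mul]
  norm_num

lemma cs_tsum {ι : Type*} [Countable ι] (f g : ι → ℝ≥0∞) :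
    (∑' i, f i * g i) ^ 2 ≤ (∑' i, f i ^ 2) * (∑' i, g i ^ 2) := by
  letI : MeasurableSpace ι := ⊤
  haveI : MeasurableSingletonClass ι := ⟨fun _ => trivial⟩
  have hpq : (2:ℝ).HolderConjugate 2 := Real.HolderConjugate.two_two
  have h := ENNReal.lintegral_mul_le_Lp_mul_Lq (Measure.count (α := ι)) hpq
    (measurable_of_countable f).aemeasurable (measurable_of_countable g).aemeasurable
  simp only [Pi.mul_apply, lintegral_count] at h
  have h2 : (∑' i, f i * g i) ^ 2 ≤
      ((∑' i, f i ^ (2:ℝ)) ^ (1/(2:ℝ)) * (∑' i, g i ^ (2:ℝ)) ^ (1/(2:ℝ))) ^ 2 :=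
    pow_le_pow_left' h 2
  refine h2.trans_eq ?_
  rw [mul_pow, sqrt_sq, sqrt_sq]
  simp [ENNReal.rpow_two]

lemma tsum_sub_left (h : ℤ → ℝ≥0∞) (m : ℤ) : ∑' l : ℤ, h (m - l) = ∑' l : ℤ, h l :=
  (Equiv.subLeft m).tsum_eq h

lemma tsum_add_right (h : ℤ → ℝ≥0∞) (t : ℤ) : ∑' i : ℤ, h (i + t) = ∑' i : ℤ, h i :=
  (Equiv.addRight t).tsum_eq h

lemma tsum_prod_mul (g h : ℤ → ℝ≥0∞) (l : ℤ) :
    ∑' p : ℤ × ℤ, g p.2 * h (p.1 + p.2 - l) = (∑' i : ℤ, g i) * ∑' i : ℤ, h i := by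
  rw [ENNReal.tsum_prod', ENNReal.tsum_comm]
  calc ∑' (j : ℤ) (i : ℤ), g j * h (i + j - l)
      = ∑' j : ℤ, g j * ∑' i : ℤ, h (i + (j - l)) := by
        simp_rw [ENNReal.tsum_mul_left, add_sub_assoc]
    _ = ∑' j : ℤ, g j * ∑' i : ℤ, h i := by simp_rw [tsum_add_right]
    _ = (∑' i : ℤ, g i) * ∑' i : ℤ, h i := ENNReal.tsum_mul_right

lemma tsum_prod_mul' (g h : ℤ → ℝ≥0∞) :
    ∑' p : ℤ × ℤ, g p.1 * h p.2 = (∑' i : ℤ, g i) * ∑' i : ℤ, h i := by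
  rw [ENNReal.tsum_prod']
  simp_rw [ENNReal.tsum_mul_left, ENNReal.tsum_mul_right]

lemma young1 (u g h : ℤ → ℝ≥0∞) :
    ∑' l : ℤ, (∑' p : ℤ × ℤ, u p.1 * g p.2 * h (p.1 + p.2 - l)) ^ 2 ≤
      (∑' i : ℤ, u i ^ 2) * ((∑' i : ℤ, g i) ^ 2 * (∑' i : ℤ, h i) ^ 2) := by
  have hx : ∀ x : ℝ≥0∞, x ^ (1/2:ℝ) * x ^ (1/2:ℝ) = x := fun x => by
    rw [← sq, sqrt_sq]
  have key : ∀ l : ℤ, (∑' p : ℤ × ℤ, u p.1 * g p.2 * h (p.1 + p.2 - l)) ^ 2 ≤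
      ((∑' i : ℤ, g i) * (∑' i : ℤ, h i)) *
        ∑' p : ℤ × ℤ, u p.1 ^ 2 * (g p.2 * h (p.1 + p.2 - l)) := by
    intro l
    have hcs := cs_tsum
      (fun p : ℤ × ℤ => u p.1 * (g p.2 * h (p.1 + p.2 - l)) ^ (1/2:ℝ))
      (fun p : ℤ × ℤ => (g p.2 * h (p.1 + p.2 - l)) ^ (1/2:ℝ))
    have e1 : ∀ p : ℤ × ℤ,
        (u p.1 * (g p.2 * h (p.1 + p.2 - l)) ^ (1/2:ℝ)) * (g p.2 * h (p.1 + p.2 - l)) ^ (1/2:ℝ)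
          = u p.1 * g p.2 * h (p.1 + p.2 - l) := fun p => by
      rw [mul_assoc, hx, mul_assoc]
    have e2 : ∀ p : ℤ × ℤ,
        (u p.1 * (g p.2 * h (p.1 + p.2 - l)) ^ (1/2:ℝ)) ^ 2
          = u p.1 ^ 2 * (g p.2 * h (p.1 + p.2 - l)) := fun p => by
      rw [mul_pow, sqrt_sq]
    simp_rw [e1, e2, sqrt_sq] at hcs
    rw [tsum_prod_mul g h l] at hcs
    exact hcs.trans_eq (mul_comm _ _)
  calc ∑' l : ℤ, (∑' p : ℤ × ℤ, u p.1 * g p.2 * h (p.1 + p.2 - l)) ^ 2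
      ≤ ∑' l : ℤ, ((∑' i : ℤ, g i) * (∑' i : ℤ, h i)) *
          ∑' p : ℤ × ℤ, u p.1 ^ 2 * (g p.2 * h (p.1 + p.2 - l)) := ENNReal.tsum_le_tsum key
    _ = ((∑' i : ℤ, g i) * (∑' i : ℤ, h i)) *
          ∑' l : ℤ, ∑' p : ℤ × ℤ, u p.1 ^ 2 * (g p.2 * h (p.1 + p.2 - l)) := ENNReal.tsum_mul_left
    _ = ((∑' i : ℤ, g i) * (∑' i : ℤ, h i)) *
          ∑' p : ℤ × ℤ, ∑' l : ℤ, (u p.1 ^ 2 * g p.2) * h (p.1 + p.2 - l) := by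
          rw [ENNReal.tsum_comm]; simp_rw [mul_assoc]
    _ = ((∑' i : ℤ, g i) * (∑' i : ℤ, h i)) *
          ∑' p : ℤ × ℤ, (u p.1 ^ 2 * g p.2) * ∑' i : ℤ, h i := by
          simp_rw [ENNReal.tsum_mul_left, tsum_sub_left]
    _ = (∑' i : ℤ, u i ^ 2) * ((∑' i : ℤ, g i) ^ 2 * (∑' i : ℤ, h i) ^ 2) := by
          rw [ENNReal.tsum_mul_right, tsum_prod_mul' (fun i => u i ^ 2) g]; ring

lemma young3 (g h u : ℤ → ℝ≥0∞) :
    ∑' l : ℤ, (∑' p : ℤ × ℤ, g p.1 * h p.2 * u (p.1 + p.2 - l)) ^ 2 ≤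
      (∑' i : ℤ, u i ^ 2) * ((∑' i : ℤ, g i) ^ 2 * (∑' i : ℤ, h i) ^ 2) := by
  have hx : ∀ x : ℝ≥0∞, x ^ (1/2:ℝ) * x ^ (1/2:ℝ) = x := fun x => by
    rw [← sq, sqrt_sq]
  have key : ∀ l : ℤ, (∑' p : ℤ × ℤ, g p.1 * h p.2 * u (p.1 + p.2 - l)) ^ 2 ≤
      ((∑' i : ℤ, g i) * (∑' i : ℤ, h i)) *
        ∑' p : ℤ × ℤ, (g p.1 * h p.2) * u (p.1 + p.2 - l) ^ 2 := by
    intro l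
    have hcs := cs_tsum
      (fun p : ℤ × ℤ => (g p.1 * h p.2) ^ (1/2:ℝ))
      (fun p : ℤ × ℤ => (g p.1 * h p.2) ^ (1/2:ℝ) * u (p.1 + p.2 - l))
    have e1 : ∀ p : ℤ × ℤ,
        (g p.1 * h p.2) ^ (1/2:ℝ) * ((g p.1 * h p.2) ^ (1/2:ℝ) * u (p.1 + p.2 - l))
          = g p.1 * h p.2 * u (p.1 + p.2 - l) := fun p => by
      rw [← mul_assoc, hx]
    have e2 : ∀ p : ℤ × ℤ,
        ((g p.1 * h p.2) ^ (1/2:ℝ) * u (p.1 + p.2 - l)) ^ 2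
          = (g p.1 * h p.2) * u (p.1 + p.2 - l) ^ 2 := fun p => by
      rw [mul_pow, sqrt_sq]
    simp_rw [e1, e2, sqrt_sq] at hcs
    rw [tsum_prod_mul' g h] at hcs
    exact hcs
  calc ∑' l : ℤ, (∑' p : ℤ × ℤ, g p.1 * h p.2 * u (p.1 + p.2 - l)) ^ 2
      ≤ ∑' l : ℤ, ((∑' i : ℤ, g i) * (∑' i : ℤ, h i)) *
          ∑' p : ℤ × ℤ, (g p.1 * h p.2) * u (p.1 + p.2 - l) ^ 2 := ENNReal.tsum_le_tsum key
    _ = ((∑' i : ℤ, g i) * (∑' i : ℤ, h i)) *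
          ∑' l : ℤ, ∑' p : ℤ × ℤ, (g p.1 * h p.2) * u (p.1 + p.2 - l) ^ 2 := ENNReal.tsum_mul_left
    _ = ((∑' i : ℤ, g i) * (∑' i : ℤ, h i)) *
          ∑' p : ℤ × ℤ, ∑' l : ℤ, (g p.1 * h p.2) * u (p.1 + p.2 - l) ^ 2 := by
          rw [ENNReal.tsum_comm]
    _ = ((∑' i : ℤ, g i) * (∑' i : ℤ, h i)) *
          ∑' p : ℤ × ℤ, (g p.1 * h p.2) * ∑' i : ℤ, u i ^ 2 := by
          simp_rw [ENNReal.tsum_mul_left, tsum_sub_left (fun k => u k ^ 2)]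
    _ = (∑' i : ℤ, u i ^ 2) * ((∑' i : ℤ, g i) ^ 2 * (∑' i : ℤ, h i) ^ 2) := by
          rw [ENNReal.tsum_mul_right, tsum_prod_mul' g h]; ring

lemma add3_sq (x y z : ℝ≥0∞) : (x + y + z) ^ 2 ≤ 9 * (x ^ 2 + y ^ 2 + z ^ 2) := by
  set m := max (max x y) z with hm
  have hx : x ≤ m := le_trans (le_max_left x y) (le_max_left _ z)
  have hy : y ≤ m := le_trans (le_max_right x y) (le_max_left _ z)
  have hz : z ≤ m := le_max_right _ z
  have h1 : (x + y + z) ^ 2 ≤ (3 * m) ^ 2 := by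
    apply pow_le_pow_left' ; calc x + y + z ≤ m + m + m := by gcongr
                                 _ = 3 * m := by ring
  refine h1.trans ?_
  have h2 : m ^ 2 ≤ x ^ 2 + y ^ 2 + z ^ 2 := by
    rcases max_cases (max x y) z with ⟨h, _⟩ | ⟨h, _⟩
    · rcases max_cases x y with ⟨h', _⟩ | ⟨h', _⟩
      · rw [hm, h, h']; calc x ^2 ≤ x^2 + y^2 := le_self_add
                             _ ≤ _ := le_self_add
      · rw [hm, h, h']; calc y ^2 ≤ x^2 + y^2 := le_add_self
                             _ ≤ _ := le_self_add
    · rw [hm, h]; exact le_add_self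
  calc (3 * m) ^ 2 = 9 * m ^ 2 := by ring
    _ ≤ 9 * (x ^ 2 + y ^ 2 + z ^ 2) := by gcongr

lemma weight_ineq {s : ℝ} (hs : 0 ≤ s) (x y z : ℝ) :
    (1 + (x + y - z) ^ 2) ^ (s/2) ≤
      9 ^ (s/2) * ((1 + x ^ 2) ^ (s/2) + (1 + y ^ 2) ^ (s/2) + (1 + z ^ 2) ^ (s/2)) := by
  have hs2 : 0 ≤ s / 2 := by linarith
  set m := max (max (1 + x ^ 2) (1 + y ^ 2)) (1 + z ^ 2) with hm
  have hx : 1 + x ^ 2 ≤ m := le_trans (le_max_left _ _) (le_max_left _ _)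
  have hy : 1 + y ^ 2 ≤ m := le_trans (le_max_right _ _) (le_max_left _ _)
  have hz : 1 + z ^ 2 ≤ m := le_max_right _ _
  have h1 : 1 + (x + y - z) ^ 2 ≤ 9 * m := by
    nlinarith [sq_nonneg (x - y), sq_nonneg (x + z), sq_nonneg (y + z)]
  have hb : (0:ℝ) ≤ 1 + (x + y - z) ^ 2 := by positivity
  have h2 : (1 + (x + y - z) ^ 2) ^ (s/2) ≤ (9 * m) ^ (s/2) :=
    Real.rpow_le_rpow hb h1 hs2
  have hm0 : (0:ℝ) ≤ m := le_trans (by positivity) hx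
  have h3 : (9 * m) ^ (s/2) = 9 ^ (s/2) * m ^ (s/2) :=
    Real.mul_rpow (by norm_num) hm0
  have h4 : m ^ (s/2) ≤ (1 + x ^ 2) ^ (s/2) + (1 + y ^ 2) ^ (s/2) + (1 + z ^ 2) ^ (s/2) := by
    have px : (0:ℝ) ≤ (1 + x ^ 2) ^ (s/2) := Real.rpow_nonneg (by positivity) _
    have py : (0:ℝ) ≤ (1 + y ^ 2) ^ (s/2) := Real.rpow_nonneg (by positivity) _
    have pz : (0:ℝ) ≤ (1 + z ^ 2) ^ (s/2) := Real.rpow_nonneg (by positivity) _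
    rcases max_cases (max (1 + x ^ 2) (1 + y ^ 2)) (1 + z ^ 2) with ⟨h, _⟩ | ⟨h, _⟩
    · rcases max_cases (1 + x ^ 2) (1 + y ^ 2) with ⟨h', _⟩ | ⟨h', _⟩
      · rw [hm, h, h']; linarith
      · rw [hm, h, h']; linarith
    · rw [hm, h]; linarith
  calc (1 + (x + y - z) ^ 2) ^ (s/2) ≤ (9 * m) ^ (s/2) := h2
    _ = 9 ^ (s/2) * m ^ (s/2) := h3
    _ ≤ _ := by have : (0:ℝ) ≤ (9:ℝ) ^ (s/2) := Real.rpow_nonneg (by norm_num) _; nlinarith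

lemma summable_inv_weight {s : ℝ} (hs : 1/2 < s) :
    Summable (fun k : ℤ => (1 + (k:ℝ) ^ 2) ^ (-s)) := by
  have h2s : (1:ℝ) < 2 * s := by linarith
  have hg : Summable (fun n : ℤ => |(n:ℝ)| ^ (-(2 * s))) := Real.summable_abs_int_rpow h2s
  have hgu : Summable (Function.update (fun n : ℤ => |(n:ℝ)| ^ (-(2 * s))) 0 1) :=
    hg.update 0 1
  refine Summable.of_nonneg_of_le (fun k => Real.rpow_nonneg (by positivity) _) ?_ hgu
  intro k
  by_cases hk : k = 0
  · subst hk
    simp [Function.update_self]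
  · rw [Function.update_of_ne hk]
    have hk1 : (1:ℝ) ≤ |(k:ℝ)| := by
      rw [← Int.cast_abs]
      exact_mod_cast Int.one_le_abs (by simpa using hk)
    have habs : |(k:ℝ)| ^ (-(2 * s)) = (((k:ℝ) ^ 2) ^ s)⁻¹ := by
      rw [Real.rpow_neg (abs_nonneg _), Real.rpow_mul (abs_nonneg _), Real.rpow_two, sq_abs]
    rw [habs, Real.rpow_neg (by positivity)]
    apply inv_anti₀
    · positivity
    · apply Real.rpow_le_rpow (by positivity) (by nlinarith) (by linarith)

lemma ofReal_norm_eq_coe_nnnorm {E : Type*} [SeminormedAddCommGroup E] (x : E) :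
    ENNReal.ofReal ‖x‖ = (‖x‖₊ : ℝ≥0∞) := ofReal_norm x

lemma term_eq (s : ℝ) (k : ℤ) (z : ℂ) :
    (ENNReal.ofReal ((1 + (k:ℝ) ^ 2) ^ (s/2)) * (‖z‖₊ : ℝ≥0∞)) ^ 2
      = ENNReal.ofReal ((1 + (k:ℝ) ^ 2) ^ s * ‖z‖ ^ 2) := by
  have h1 : ((1 + (k:ℝ) ^ 2) ^ (s/2)) ^ 2 = (1 + (k:ℝ) ^ 2) ^ s := by
    rw [← Real.rpow_natCast ((1 + (k:ℝ) ^ 2) ^ (s/2)) 2, ← Real.rpow_mul (by positivity)]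
    norm_num
  rw [mul_pow, ← ENNReal.ofReal_pow (Real.rpow_nonneg (by positivity) _), h1,
    ← ofReal_norm_eq_coe_nnnorm, ← ENNReal.ofReal_pow (norm_nonneg _),
    ← ENNReal.ofReal_mul (Real.rpow_nonneg (by positivity) _)]

end QVB

open QVB in
/-- Let `s > 1/2` and `M ≥ 0`, and let `c : ℤ⁴ → ℂ` vanish off the zero-momentum
set `i + j = k + ℓ` and be bounded by `M`. There is a constant `C_s > 0` depending only on `s`
such that for all `a, b, a' ∈ ℓ²_s`, the sums
`w_ℓ = ∑_{i + j = k + ℓ} c(i,j,k,ℓ) a_i b_j a'_k` converge absolutely, `w ∈ ℓ²_s`, and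
`‖w‖_s ≤ C_s M ‖a‖_s ‖b‖_s ‖a'‖_s`.  (The inner sum is parametrized by `(i, j) ∈ ℤ²` with
`k = i + j - ℓ`.) -/
theorem quartic_vectorfield_bound (s : ℝ) (hs : 1 / 2 < s) :
    ∃ C : ℝ, 0 < C ∧ ∀ (M : ℝ), 0 ≤ M →
      ∀ c : ℤ → ℤ → ℤ → ℤ → ℂ,
        (∀ i j k l : ℤ, i + j ≠ k + l → c i j k l = 0) →
        (∀ i j k l : ℤ, ‖c i j k l‖ ≤ M) →
        ∀ a b a' : ℤ → ℂ,
          Summable (fun k : ℤ => (1 + (k : ℝ) ^ 2) ^ s * ‖a k‖ ^ 2) →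
          Summable (fun k : ℤ => (1 + (k : ℝ) ^ 2) ^ s * ‖b k‖ ^ 2) →
          Summable (fun k : ℤ => (1 + (k : ℝ) ^ 2) ^ s * ‖a' k‖ ^ 2) →
          (∀ l : ℤ, Summable (fun p : ℤ × ℤ =>
              ‖c p.1 p.2 (p.1 + p.2 - l) l * a p.1 * b p.2 * a' (p.1 + p.2 - l)‖)) ∧
          Summable (fun l : ℤ => (1 + (l : ℝ) ^ 2) ^ s *
              ‖∑' p : ℤ × ℤ, c p.1 p.2 (p.1 + p.2 - l) l * a p.1 * b p.2 * a' (p.1 + p.2 - l)‖ ^ 2) ∧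
          Real.sqrt (∑' l : ℤ, (1 + (l : ℝ) ^ 2) ^ s *
              ‖∑' p : ℤ × ℤ, c p.1 p.2 (p.1 + p.2 - l) l * a p.1 * b p.2 * a' (p.1 + p.2 - l)‖ ^ 2) ≤
            C * M * Real.sqrt (∑' k : ℤ, (1 + (k : ℝ) ^ 2) ^ s * ‖a k‖ ^ 2) *
              Real.sqrt (∑' k : ℤ, (1 + (k : ℝ) ^ 2) ^ s * ‖b k‖ ^ 2) *
              Real.sqrt (∑' k : ℤ, (1 + (k : ℝ) ^ 2) ^ s * ‖a' k‖ ^ 2) := by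
  have hs0 : (0:ℝ) ≤ s := by linarith
  -- the weight
  set V : ℤ → ℝ≥0∞ := fun k => ENNReal.ofReal ((1 + (k:ℝ) ^ 2) ^ (s/2)) with hVdef
  have hVpos : ∀ k : ℤ, (0:ℝ) < (1 + (k:ℝ) ^ 2) ^ (s/2) := fun k =>
    Real.rpow_pos_of_pos (by positivity) _
  have hVne0 : ∀ k : ℤ, V k ≠ 0 := fun k => by
    simp [hVdef, ENNReal.ofReal_eq_zero, not_le, hVpos k]
  have hVnetop : ∀ k : ℤ, V k ≠ ∞ := fun k => ENNReal.ofReal_ne_top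
  have hV1 : ∀ k : ℤ, 1 ≤ V k := fun k => by
    rw [hVdef, ← ENNReal.ofReal_one]
    apply ENNReal.ofReal_le_ofReal
    calc (1:ℝ) = 1 ^ (s/2) := (Real.one_rpow _).symm
      _ ≤ (1 + (k:ℝ) ^ 2) ^ (s/2) := Real.rpow_le_rpow (by norm_num) (by nlinarith [sq_nonneg ((k:ℝ))]) (by linarith)
  -- the constant K
  set K : ℝ≥0∞ := ∑' k : ℤ, ((V k)⁻¹) ^ 2 with hKdef
  have hKterm : ∀ k : ℤ, ((V k)⁻¹) ^ 2 = ENNReal.ofReal ((1 + (k:ℝ) ^ 2) ^ (-s)) := by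
    intro k
    rw [hVdef]
    rw [← ENNReal.ofReal_inv_of_pos (hVpos k), ← ENNReal.ofReal_pow (by positivity)]
    congr 1
    rw [← Real.rpow_natCast ((1 + (k:ℝ) ^ 2) ^ (s/2))⁻¹ 2, ← Real.rpow_neg_one,
      ← Real.rpow_mul (le_of_lt (hVpos k)), ← Real.rpow_mul (by positivity)]
    norm_num
  have hK : K ≠ ∞ := by
    rw [hKdef]
    simp_rw [hKterm]
    rw [← ENNReal.ofReal_tsum_of_nonneg (fun k => Real.rpow_nonneg (by positivity) _)
      (summable_inv_weight hs)]
    exact ENNReal.ofReal_ne_top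
  set c₀ : ℝ≥0∞ := ENNReal.ofReal ((9:ℝ) ^ (s/2)) with hc₀def
  have hc₀top : c₀ ≠ ∞ := ENNReal.ofReal_ne_top
  set D : ℝ≥0∞ := 27 * c₀ ^ 2 * K ^ 2 with hDdef
  have hDtop : D ≠ ∞ := by
    rw [hDdef]
    exact ENNReal.mul_ne_top (ENNReal.mul_ne_top (by norm_num) (ENNReal.pow_ne_top hc₀top))
      (ENNReal.pow_ne_top hK)
  refine ⟨Real.sqrt D.toReal + 1, by positivity, ?_⟩
  intro M hM c _hsupp hbd a b a' ha hb ha'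
  set M' : ℝ≥0∞ := ENNReal.ofReal M with hM'def
  have hM'top : M' ≠ ∞ := ENNReal.ofReal_ne_top
  set A : ℤ → ℝ≥0∞ := fun k => (‖a k‖₊ : ℝ≥0∞) with hAdef
  set B : ℤ → ℝ≥0∞ := fun k => (‖b k‖₊ : ℝ≥0∞) with hBdef
  set A' : ℤ → ℝ≥0∞ := fun k => (‖a' k‖₊ : ℝ≥0∞) with hA'def
  -- weighted square sums
  have hSa_eq : ∑' k : ℤ, (V k * A k) ^ 2
      = ENNReal.ofReal (∑' k : ℤ, (1 + (k:ℝ) ^ 2) ^ s * ‖a k‖ ^ 2) := by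
    rw [ENNReal.ofReal_tsum_of_nonneg (fun k => by positivity) ha]
    exact tsum_congr fun k => term_eq s k (a k)
  have hSb_eq : ∑' k : ℤ, (V k * B k) ^ 2
      = ENNReal.ofReal (∑' k : ℤ, (1 + (k:ℝ) ^ 2) ^ s * ‖b k‖ ^ 2) := by
    rw [ENNReal.ofReal_tsum_of_nonneg (fun k => by positivity) hb]
    exact tsum_congr fun k => term_eq s k (b k)
  have hSa'_eq : ∑' k : ℤ, (V k * A' k) ^ 2
      = ENNReal.ofReal (∑' k : ℤ, (1 + (k:ℝ) ^ 2) ^ s * ‖a' k‖ ^ 2) := by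
    rw [ENNReal.ofReal_tsum_of_nonneg (fun k => by positivity) ha']
    exact tsum_congr fun k => term_eq s k (a' k)
  set Sa : ℝ≥0∞ := ∑' k : ℤ, (V k * A k) ^ 2 with hSadef
  set Sb : ℝ≥0∞ := ∑' k : ℤ, (V k * B k) ^ 2 with hSbdef
  set Sa' : ℝ≥0∞ := ∑' k : ℤ, (V k * A' k) ^ 2 with hSa'def
  have hSa_top : Sa ≠ ∞ := by rw [hSa_eq]; exact ENNReal.ofReal_ne_top
  have hSb_top : Sb ≠ ∞ := by rw [hSb_eq]; exact ENNReal.ofReal_ne_top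
  have hSa'_top : Sa' ≠ ∞ := by rw [hSa'_eq]; exact ENNReal.ofReal_ne_top
  -- ℓ¹ bounds
  have l1bound : ∀ x : ℤ → ℝ≥0∞, (∑' k : ℤ, x k) ^ 2 ≤ K * ∑' k : ℤ, (V k * x k) ^ 2 := by
    intro x
    have h1 : ∀ k : ℤ, x k = (V k)⁻¹ * (V k * x k) := fun k => by
      rw [← mul_assoc, ENNReal.inv_mul_cancel (hVne0 k) (hVnetop k), one_mul]
    calc (∑' k : ℤ, x k) ^ 2 = (∑' k : ℤ, (V k)⁻¹ * (V k * x k)) ^ 2 := by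
          congr 1; exact tsum_congr h1
      _ ≤ (∑' k : ℤ, ((V k)⁻¹) ^ 2) * ∑' k : ℤ, (V k * x k) ^ 2 := cs_tsum _ _
      _ = K * ∑' k : ℤ, (V k * x k) ^ 2 := by rw [hKdef]
  set Na : ℝ≥0∞ := ∑' k : ℤ, A k with hNadef
  set Nb : ℝ≥0∞ := ∑' k : ℤ, B k with hNbdef
  set Na' : ℝ≥0∞ := ∑' k : ℤ, A' k with hNa'def
  have hNa2 : Na ^ 2 ≤ K * Sa := l1bound A
  have hNb2 : Nb ^ 2 ≤ K * Sb := l1bound B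
  have hNa'2 : Na' ^ 2 ≤ K * Sa' := l1bound A'
  have sq_ne_top : ∀ {x y : ℝ≥0∞}, x ^ 2 ≤ y → y ≠ ∞ → x ≠ ∞ := by
    intro x y hxy hy hx
    rw [hx] at hxy
    rw [ENNReal.top_pow (by norm_num : 2 ≠ 0), top_le_iff] at hxy
    exact hy hxy
  have hNa_top : Na ≠ ∞ := sq_ne_top hNa2 (ENNReal.mul_ne_top hK hSa_top)
  have hNb_top : Nb ≠ ∞ := sq_ne_top hNb2 (ENNReal.mul_ne_top hK hSb_top)
  -- pointwise bound on A'
  have hA'bd : ∀ k : ℤ, A' k ≤ Sa' ^ (1/2:ℝ) := by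
    intro k
    have h1 : A' k ≤ V k * A' k := le_mul_of_one_le_left zero_le (hV1 k)
    have h2 : (V k * A' k) ^ 2 ≤ Sa' := ENNReal.le_tsum k
    calc A' k ≤ V k * A' k := h1
      _ = ((V k * A' k) ^ 2) ^ (1/2:ℝ) := (sq_sqrt _).symm
      _ ≤ Sa' ^ (1/2:ℝ) := ENNReal.rpow_le_rpow h2 (by norm_num)
  -- bound on each term of the inner sum
  have hterm : ∀ (l : ℤ) (p : ℤ × ℤ),
      (‖c p.1 p.2 (p.1 + p.2 - l) l * a p.1 * b p.2 * a' (p.1 + p.2 - l)‖₊ : ℝ≥0∞)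
        ≤ M' * (A p.1 * B p.2 * A' (p.1 + p.2 - l)) := by
    intro l p
    have hc : (‖c p.1 p.2 (p.1 + p.2 - l) l‖₊ : ℝ≥0∞) ≤ M' := by
      rw [← ofReal_norm_eq_coe_nnnorm, hM'def]
      exact ENNReal.ofReal_le_ofReal (hbd _ _ _ _)
    calc (‖c p.1 p.2 (p.1 + p.2 - l) l * a p.1 * b p.2 * a' (p.1 + p.2 - l)‖₊ : ℝ≥0∞)
        = (‖c p.1 p.2 (p.1 + p.2 - l) l‖₊ : ℝ≥0∞) * (A p.1 * B p.2 * A' (p.1 + p.2 - l)) := by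
          simp only [nnnorm_mul, ENNReal.coe_mul, hAdef, hBdef, hA'def]; ring
      _ ≤ M' * (A p.1 * B p.2 * A' (p.1 + p.2 - l)) := mul_le_mul_left hc _
  set G : ℤ → ℝ≥0∞ := fun l => ∑' p : ℤ × ℤ, A p.1 * B p.2 * A' (p.1 + p.2 - l) with hGdef
  have hG_top : ∀ l : ℤ, G l ≠ ∞ := by
    intro l
    have h1 : G l ≤ (Na * Nb) * Sa' ^ (1/2:ℝ) := by
      rw [hGdef]
      calc ∑' p : ℤ × ℤ, A p.1 * B p.2 * A' (p.1 + p.2 - l)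
          ≤ ∑' p : ℤ × ℤ, (A p.1 * B p.2) * Sa' ^ (1/2:ℝ) := by
            apply ENNReal.tsum_le_tsum; intro p
            exact mul_le_mul_right (hA'bd _) _
        _ = (∑' p : ℤ × ℤ, A p.1 * B p.2) * Sa' ^ (1/2:ℝ) := ENNReal.tsum_mul_right
        _ = (Na * Nb) * Sa' ^ (1/2:ℝ) := by rw [tsum_prod_mul' A B]
    exact ne_top_of_le_ne_top (ENNReal.mul_ne_top (ENNReal.mul_ne_top hNa_top hNb_top)
      (ENNReal.rpow_ne_top_of_nonneg (by norm_num) hSa'_top)) h1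
  have hinner_le : ∀ l : ℤ, ∑' p : ℤ × ℤ,
      (‖c p.1 p.2 (p.1 + p.2 - l) l * a p.1 * b p.2 * a' (p.1 + p.2 - l)‖₊ : ℝ≥0∞)
        ≤ M' * G l := by
    intro l
    calc ∑' p : ℤ × ℤ, (‖c p.1 p.2 (p.1 + p.2 - l) l * a p.1 * b p.2 * a' (p.1 + p.2 - l)‖₊ : ℝ≥0∞)
        ≤ ∑' p : ℤ × ℤ, M' * (A p.1 * B p.2 * A' (p.1 + p.2 - l)) :=
          ENNReal.tsum_le_tsum (hterm l)
      _ = M' * G l := by rw [hGdef, ENNReal.tsum_mul_left]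
  -- Goal 1 : inner summability
  have goal1 : ∀ l : ℤ, Summable (fun p : ℤ × ℤ =>
      ‖c p.1 p.2 (p.1 + p.2 - l) l * a p.1 * b p.2 * a' (p.1 + p.2 - l)‖) := by
    intro l
    have h1 : ∑' p : ℤ × ℤ,
        ((‖c p.1 p.2 (p.1 + p.2 - l) l * a p.1 * b p.2 * a' (p.1 + p.2 - l)‖₊ : ℝ≥0) : ℝ≥0∞)
          ≠ ∞ := ne_top_of_le_ne_top (ENNReal.mul_ne_top hM'top (hG_top l)) (hinner_le l)
    have h2 := ENNReal.tsum_coe_ne_top_iff_summable.mp h1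
    exact (NNReal.summable_coe.mpr h2).congr fun p => by simp [coe_nnnorm]
  refine ⟨goal1, ?_⟩
  -- the sequence w
  set w : ℤ → ℂ := fun l =>
    ∑' p : ℤ × ℤ, c p.1 p.2 (p.1 + p.2 - l) l * a p.1 * b p.2 * a' (p.1 + p.2 - l) with hwdef
  have hw_le : ∀ l : ℤ, (‖w l‖₊ : ℝ≥0∞) ≤ M' * G l := by
    intro l
    have h1 : ‖w l‖ ≤ ∑' p : ℤ × ℤ,
        ‖c p.1 p.2 (p.1 + p.2 - l) l * a p.1 * b p.2 * a' (p.1 + p.2 - l)‖ :=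
      norm_tsum_le_tsum_norm (goal1 l)
    calc (‖w l‖₊ : ℝ≥0∞) = ENNReal.ofReal ‖w l‖ := (ofReal_norm_eq_coe_nnnorm _).symm
      _ ≤ ENNReal.ofReal (∑' p : ℤ × ℤ,
          ‖c p.1 p.2 (p.1 + p.2 - l) l * a p.1 * b p.2 * a' (p.1 + p.2 - l)‖) :=
          ENNReal.ofReal_le_ofReal h1
      _ = ∑' p : ℤ × ℤ, ENNReal.ofReal
          ‖c p.1 p.2 (p.1 + p.2 - l) l * a p.1 * b p.2 * a' (p.1 + p.2 - l)‖ :=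
          ENNReal.ofReal_tsum_of_nonneg (fun p => norm_nonneg _) (goal1 l)
      _ = ∑' p : ℤ × ℤ,
          (‖c p.1 p.2 (p.1 + p.2 - l) l * a p.1 * b p.2 * a' (p.1 + p.2 - l)‖₊ : ℝ≥0∞) := by
          simp_rw [ofReal_norm_eq_coe_nnnorm]
      _ ≤ M' * G l := hinner_le l
  -- splitting of the weight
  have hVsplit : ∀ (l : ℤ) (p : ℤ × ℤ),
      V l ≤ c₀ * (V p.1 + V p.2 + V (p.1 + p.2 - l)) := by
    intro l p
    have h0 := weight_ineq hs0 (p.1 : ℝ) (p.2 : ℝ) (((p.1 + p.2 - l : ℤ) : ℝ))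
    have harg : ((p.1:ℝ) + (p.2:ℝ) - ((p.1 + p.2 - l : ℤ) : ℝ)) = (l:ℝ) := by push_cast; ring
    rw [harg] at h0
    rw [hVdef, hc₀def]
    calc ENNReal.ofReal ((1 + (l:ℝ) ^ 2) ^ (s/2))
        ≤ ENNReal.ofReal ((9:ℝ) ^ (s/2) * ((1 + (p.1:ℝ) ^ 2) ^ (s/2)
            + (1 + (p.2:ℝ) ^ 2) ^ (s/2) + (1 + (((p.1 + p.2 - l : ℤ)):ℝ) ^ 2) ^ (s/2))) :=
          ENNReal.ofReal_le_ofReal h0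
      _ = ENNReal.ofReal ((9:ℝ) ^ (s/2)) * (ENNReal.ofReal ((1 + (p.1:ℝ) ^ 2) ^ (s/2))
            + ENNReal.ofReal ((1 + (p.2:ℝ) ^ 2) ^ (s/2))
            + ENNReal.ofReal ((1 + (((p.1 + p.2 - l : ℤ)):ℝ) ^ 2) ^ (s/2))) := by
          rw [ENNReal.ofReal_mul (Real.rpow_nonneg (by norm_num) _),
            ENNReal.ofReal_add (by positivity) (Real.rpow_nonneg (by positivity) _),
            ENNReal.ofReal_add (Real.rpow_nonneg (by positivity) _)
              (Real.rpow_nonneg (by positivity) _)]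
  -- the three pieces
  set T1 : ℤ → ℝ≥0∞ := fun l => ∑' p : ℤ × ℤ, (V p.1 * A p.1) * B p.2 * A' (p.1 + p.2 - l)
    with hT1def
  set T2 : ℤ → ℝ≥0∞ := fun l => ∑' p : ℤ × ℤ, (V p.1 * B p.1) * A p.2 * A' (p.1 + p.2 - l)
    with hT2def
  set T3 : ℤ → ℝ≥0∞ := fun l =>
    ∑' p : ℤ × ℤ, A p.1 * B p.2 * (V (p.1 + p.2 - l) * A' (p.1 + p.2 - l)) with hT3def
  have hVG : ∀ l : ℤ, V l * G l ≤ c₀ * (T1 l + T2 l + T3 l) := by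
    intro l
    have hpt : ∀ p : ℤ × ℤ, V l * (A p.1 * B p.2 * A' (p.1 + p.2 - l))
        ≤ c₀ * ((V p.1 * A p.1) * B p.2 * A' (p.1 + p.2 - l)
            + (V p.2 * B p.2) * A p.1 * A' (p.1 + p.2 - l)
            + A p.1 * B p.2 * (V (p.1 + p.2 - l) * A' (p.1 + p.2 - l))) := by
      intro p
      calc V l * (A p.1 * B p.2 * A' (p.1 + p.2 - l))
          ≤ (c₀ * (V p.1 + V p.2 + V (p.1 + p.2 - l))) * (A p.1 * B p.2 * A' (p.1 + p.2 - l)) :=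
            mul_le_mul_left (hVsplit l p) _
        _ = c₀ * ((V p.1 * A p.1) * B p.2 * A' (p.1 + p.2 - l)
            + (V p.2 * B p.2) * A p.1 * A' (p.1 + p.2 - l)
            + A p.1 * B p.2 * (V (p.1 + p.2 - l) * A' (p.1 + p.2 - l))) := by ring
    have hswap : ∑' p : ℤ × ℤ, (V p.2 * B p.2) * A p.1 * A' (p.1 + p.2 - l) = T2 l := by
      calc ∑' p : ℤ × ℤ, (V p.2 * B p.2) * A p.1 * A' (p.1 + p.2 - l)
          = ∑' p : ℤ × ℤ, (fun q : ℤ × ℤ => (V q.1 * B q.1) * A q.2 * A' (q.1 + q.2 - l))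
              ((Equiv.prodComm ℤ ℤ) p) := by
            refine tsum_congr fun p => ?_
            simp only [Equiv.prodComm_apply, Prod.fst_swap, Prod.snd_swap]
            rw [add_comm p.2 p.1]
        _ = ∑' q : ℤ × ℤ, (V q.1 * B q.1) * A q.2 * A' (q.1 + q.2 - l) :=
            (Equiv.prodComm ℤ ℤ).tsum_eq
              (fun q : ℤ × ℤ => (V q.1 * B q.1) * A q.2 * A' (q.1 + q.2 - l))
        _ = T2 l := rfl
    calc V l * G l = ∑' p : ℤ × ℤ, V l * (A p.1 * B p.2 * A' (p.1 + p.2 - l)) := by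
          rw [hGdef, ENNReal.tsum_mul_left]
      _ ≤ ∑' p : ℤ × ℤ, c₀ * ((V p.1 * A p.1) * B p.2 * A' (p.1 + p.2 - l)
            + (V p.2 * B p.2) * A p.1 * A' (p.1 + p.2 - l)
            + A p.1 * B p.2 * (V (p.1 + p.2 - l) * A' (p.1 + p.2 - l))) :=
          ENNReal.tsum_le_tsum hpt
      _ = c₀ * (T1 l + T2 l + T3 l) := by
          rw [ENNReal.tsum_mul_left]
          congr 1
          rw [ENNReal.tsum_add, ENNReal.tsum_add, hswap]
  -- the main estimate in ℝ≥0∞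
  have hstep : ∀ l : ℤ, (V l * (‖w l‖₊ : ℝ≥0∞)) ^ 2
      ≤ (M' ^ 2 * c₀ ^ 2) * (9 * (T1 l ^ 2 + T2 l ^ 2 + T3 l ^ 2)) := by
    intro l
    have h1 : V l * (‖w l‖₊ : ℝ≥0∞) ≤ M' * (c₀ * (T1 l + T2 l + T3 l)) := by
      calc V l * (‖w l‖₊ : ℝ≥0∞) ≤ V l * (M' * G l) := mul_le_mul_right (hw_le l) _
        _ = M' * (V l * G l) := by ring
        _ ≤ M' * (c₀ * (T1 l + T2 l + T3 l)) := mul_le_mul_right (hVG l) _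
    calc (V l * (‖w l‖₊ : ℝ≥0∞)) ^ 2 ≤ (M' * (c₀ * (T1 l + T2 l + T3 l))) ^ 2 :=
          pow_le_pow_left' h1 2
      _ = (M' ^ 2 * c₀ ^ 2) * (T1 l + T2 l + T3 l) ^ 2 := by ring
      _ ≤ (M' ^ 2 * c₀ ^ 2) * (9 * (T1 l ^ 2 + T2 l ^ 2 + T3 l ^ 2)) :=
          mul_le_mul_right (add3_sq _ _ _) _
  have hS1 : ∑' l : ℤ, T1 l ^ 2 ≤ Sa * (Nb ^ 2 * Na' ^ 2) := young1 (fun k => V k * A k) B A'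
  have hS2 : ∑' l : ℤ, T2 l ^ 2 ≤ Sb * (Na ^ 2 * Na' ^ 2) := young1 (fun k => V k * B k) A A'
  have hS3 : ∑' l : ℤ, T3 l ^ 2 ≤ Sa' * (Na ^ 2 * Nb ^ 2) :=
    young3 A B (fun k => V k * A' k)
  have hmain : ∑' l : ℤ, (V l * (‖w l‖₊ : ℝ≥0∞)) ^ 2 ≤ M' ^ 2 * (D * (Sa * (Sb * Sa'))) := by
    calc ∑' l : ℤ, (V l * (‖w l‖₊ : ℝ≥0∞)) ^ 2
        ≤ ∑' l : ℤ, (M' ^ 2 * c₀ ^ 2) * (9 * (T1 l ^ 2 + T2 l ^ 2 + T3 l ^ 2)) :=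
          ENNReal.tsum_le_tsum hstep
      _ = (M' ^ 2 * c₀ ^ 2) * (9 * ((∑' l : ℤ, T1 l ^ 2) + (∑' l : ℤ, T2 l ^ 2)
            + (∑' l : ℤ, T3 l ^ 2))) := by
          rw [ENNReal.tsum_mul_left]
          congr 1
          rw [ENNReal.tsum_mul_left]
          congr 1
          rw [ENNReal.tsum_add, ENNReal.tsum_add]
      _ ≤ (M' ^ 2 * c₀ ^ 2) * (9 * (Sa * (Nb ^ 2 * Na' ^ 2) + Sb * (Na ^ 2 * Na' ^ 2)
            + Sa' * (Na ^ 2 * Nb ^ 2))) := by gcongr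
      _ ≤ (M' ^ 2 * c₀ ^ 2) * (9 * (Sa * ((K * Sb) * (K * Sa')) + Sb * ((K * Sa) * (K * Sa'))
            + Sa' * ((K * Sa) * (K * Sb)))) := by gcongr
      _ = M' ^ 2 * (D * (Sa * (Sb * Sa'))) := by rw [hDdef]; ring
  have hmain_top : ∑' l : ℤ, (V l * (‖w l‖₊ : ℝ≥0∞)) ^ 2 ≠ ∞ :=
    ne_top_of_le_ne_top (ENNReal.mul_ne_top (ENNReal.pow_ne_top hM'top)
      (ENNReal.mul_ne_top hDtop (ENNReal.mul_ne_top hSa_top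
        (ENNReal.mul_ne_top hSb_top hSa'_top)))) hmain
  -- identify the terms with ofReal
  have hofg : ∀ l : ℤ, (V l * (‖w l‖₊ : ℝ≥0∞)) ^ 2
      = ENNReal.ofReal ((1 + (l:ℝ) ^ 2) ^ s * ‖w l‖ ^ 2) := fun l => term_eq s l (w l)
  -- Goal 2 : summability of the weighted norms
  have goal2 : Summable (fun l : ℤ => (1 + (l:ℝ) ^ 2) ^ s * ‖w l‖ ^ 2) := by
    have h1 : ∑' l : ℤ, ENNReal.ofReal ((1 + (l:ℝ) ^ 2) ^ s * ‖w l‖ ^ 2) ≠ ∞ := by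
      rw [← tsum_congr hofg]; exact hmain_top
    have h2 : ∑' l : ℤ, ((((1 + (l:ℝ) ^ 2) ^ s * ‖w l‖ ^ 2).toNNReal : ℝ≥0) : ℝ≥0∞) ≠ ∞ := h1
    have h3 := ENNReal.tsum_coe_ne_top_iff_summable.mp h2
    exact (NNReal.summable_coe.mpr h3).congr fun l =>
      Real.coe_toNNReal _ (by positivity)
  refine ⟨goal2, ?_⟩
  -- final inequality
  set α : ℝ := ∑' k : ℤ, (1 + (k:ℝ) ^ 2) ^ s * ‖a k‖ ^ 2 with hαdef
  set β : ℝ := ∑' k : ℤ, (1 + (k:ℝ) ^ 2) ^ s * ‖b k‖ ^ 2 with hβdef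
  set γ : ℝ := ∑' k : ℤ, (1 + (k:ℝ) ^ 2) ^ s * ‖a' k‖ ^ 2 with hγdef
  have hα0 : 0 ≤ α := tsum_nonneg fun k => by positivity
  have hβ0 : 0 ≤ β := tsum_nonneg fun k => by positivity
  have hγ0 : 0 ≤ γ := tsum_nonneg fun k => by positivity
  have hL_eq : ENNReal.ofReal (∑' l : ℤ, (1 + (l:ℝ) ^ 2) ^ s * ‖w l‖ ^ 2)
      = ∑' l : ℤ, (V l * (‖w l‖₊ : ℝ≥0∞)) ^ 2 := by
    rw [ENNReal.ofReal_tsum_of_nonneg (fun l => by positivity) goal2]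
    exact (tsum_congr hofg).symm
  have hDR : D = ENNReal.ofReal D.toReal := (ENNReal.ofReal_toReal hDtop).symm
  have hRHS_eq : M' ^ 2 * (D * (Sa * (Sb * Sa')))
      = ENNReal.ofReal (M ^ 2 * (D.toReal * (α * (β * γ)))) := by
    conv_lhs => rw [hM'def, hSa_eq, hSb_eq, hSa'_eq, ← ENNReal.ofReal_pow hM, hDR]
    rw [← ENNReal.ofReal_mul hβ0, ← ENNReal.ofReal_mul hα0,
      ← ENNReal.ofReal_mul ENNReal.toReal_nonneg, ← ENNReal.ofReal_mul (by positivity)]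
  have hfinal : ∑' l : ℤ, (1 + (l:ℝ) ^ 2) ^ s * ‖w l‖ ^ 2
      ≤ M ^ 2 * (D.toReal * (α * (β * γ))) := by
    have h1 : ENNReal.ofReal (∑' l : ℤ, (1 + (l:ℝ) ^ 2) ^ s * ‖w l‖ ^ 2)
        ≤ ENNReal.ofReal (M ^ 2 * (D.toReal * (α * (β * γ)))) := by
      rw [hL_eq, ← hRHS_eq]; exact hmain
    exact (ENNReal.ofReal_le_ofReal_iff (by positivity)).mp h1
  have hsqrt : Real.sqrt (∑' l : ℤ, (1 + (l:ℝ) ^ 2) ^ s * ‖w l‖ ^ 2)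
      ≤ Real.sqrt D.toReal * M * Real.sqrt α * Real.sqrt β * Real.sqrt γ := by
    calc Real.sqrt (∑' l : ℤ, (1 + (l:ℝ) ^ 2) ^ s * ‖w l‖ ^ 2)
        ≤ Real.sqrt (M ^ 2 * (D.toReal * (α * (β * γ)))) := Real.sqrt_le_sqrt hfinal
      _ = Real.sqrt (M ^ 2) * (Real.sqrt D.toReal * (Real.sqrt α * (Real.sqrt β
            * Real.sqrt γ))) := by
          rw [Real.sqrt_mul (by positivity), Real.sqrt_mul ENNReal.toReal_nonneg,
            Real.sqrt_mul hα0, Real.sqrt_mul hβ0]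
      _ = Real.sqrt D.toReal * M * Real.sqrt α * Real.sqrt β * Real.sqrt γ := by
          rw [Real.sqrt_sq hM]; ring
  calc Real.sqrt (∑' l : ℤ, (1 + (l:ℝ) ^ 2) ^ s * ‖w l‖ ^ 2)
      ≤ Real.sqrt D.toReal * M * Real.sqrt α * Real.sqrt β * Real.sqrt γ := hsqrt
    _ ≤ (Real.sqrt D.toReal + 1) * M * Real.sqrt α * Real.sqrt β * Real.sqrt γ := by
        have h1 : Real.sqrt D.toReal ≤ Real.sqrt D.toReal + 1 := by linarith
        gcongr
end

section
/- Let n ≥ 1, R > 0, δ > 0, and let D ⊆ ℝⁿ be a bounded measurable set with diameter at most R. Let f : ℝⁿ → ℝ be continuously differentiable and suppose there is a unit vector 𝔷 ∈ ℝⁿ such that ∇f(ρ)·𝔷 ≥ δ for every ρ in the closed convex hull of D. Then there exists a constant C > 0, depending only on n and R, such that for every ε > 0 the Lebesgue measure of {ρ ∈ D : |f(ρ)| < ε} is at most C ε/δ. -/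
open MeasureTheory

private lemma euclid_abs_apply_le_norm {k : ℕ} (x : EuclideanSpace ℝ (Fin k)) (i : Fin k) :
    |x i| ≤ ‖x‖ := by
  rw [EuclideanSpace.norm_eq, ← Real.sqrt_sq_eq_abs]
  apply Real.sqrt_le_sqrt
  have := Finset.single_le_sum (f := fun j => ‖x j‖ ^ 2)
    (fun j _ => sq_nonneg _) (Finset.mem_univ i)
  simpa [Real.norm_eq_abs, sq_abs] using this

/-- Let `n ≥ 1`, `R > 0`. There is `C > 0` depending only on `n` and `R` such that
for every `δ > 0`, every bounded measurable `D ⊆ ℝⁿ` of diameter at most `R`, every `C¹`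
function `f : ℝⁿ → ℝ` admitting a unit vector `z` with `∇f(ρ)·z ≥ δ` on the closed convex hull
of `D`, and every `ε > 0`, the Lebesgue measure of `{ρ ∈ D : |f ρ| < ε}` is at most `C ε / δ`. -/
theorem measure_sublevel_of_directional_deriv_lower_bound
    (n : ℕ) (hn : 1 ≤ n) (R : ℝ) (hR : 0 < R) :
    ∃ C : ℝ, 0 < C ∧
      ∀ (δ : ℝ), 0 < δ →
      ∀ D : Set (EuclideanSpace ℝ (Fin n)),
        Bornology.IsBounded D → MeasurableSet D → Metric.diam D ≤ R →
      ∀ f : EuclideanSpace ℝ (Fin n) → ℝ, ContDiff ℝ 1 f →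
      ∀ z : EuclideanSpace ℝ (Fin n), ‖z‖ = 1 →
        (∀ ρ ∈ closure (convexHull ℝ D), δ ≤ fderiv ℝ f ρ z) →
      ∀ ε : ℝ, 0 < ε →
        volume {ρ ∈ D | |f ρ| < ε} ≤ ENNReal.ofReal (C * ε / δ) := by
  obtain ⟨m, rfl⟩ : ∃ m, n = m + 1 := ⟨n - 1, (Nat.succ_pred_eq_of_pos hn).symm⟩
  refine ⟨2 * (2 * R) ^ m, by positivity, ?_⟩
  intro δ hδ D hDb hDm hDdiam f hf z hz hder ε hε
  -- orthonormal basis with b 0 = z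
  have hON : Orthonormal ℝ (Set.restrict {(0 : Fin (m+1))} (fun _ : Fin (m+1) => z)) :=
    ⟨fun i => by exact hz, fun {i j} h => absurd (Subsingleton.elim i j) h⟩
  obtain ⟨b, hb⟩ := hON.exists_orthonormalBasis_extension_of_card_eq (by simp) 
  have hb0 : b 0 = z := hb 0 rfl
  -- the coordinate map
  set Φ : ℝ × (Fin m → ℝ) → EuclideanSpace ℝ (Fin (m+1)) := fun p =>
    b.repr.symm ((MeasurableEquiv.toLp 2 (Fin (m+1) → ℝ))
      ((MeasurableEquiv.piFinSuccAbove (fun _ => ℝ) 0).symm p)) with hΦdef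
  have hΦmp : MeasurePreserving Φ (volume.prod volume) volume :=
    (b.measurePreserving_repr_symm.comp
      (EuclideanSpace.volume_preserving_symm_measurableEquiv_toLp (Fin (m+1))).symm).comp
      (volume_preserving_piFinSuccAbove (fun _ => ℝ) 0).symm
  -- coordinates of Φ
  have hrepr : ∀ (t : ℝ) (y : Fin m → ℝ),
      ⇑(b.repr (Φ (t, y))) = Fin.insertNth 0 t y := by
    intro t y
    simp only [hΦdef, LinearIsometryEquiv.apply_symm_apply]
    rfl
  have hcoord0 : ∀ (t : ℝ) (y : Fin m → ℝ), b.repr (Φ (t, y)) 0 = t := by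
    intro t y
    rw [show b.repr (Φ (t, y)) 0 = (⇑(b.repr (Φ (t, y)))) 0 from rfl, hrepr]
    simp
  have hcoordsucc : ∀ (t : ℝ) (y : Fin m → ℝ) (j : Fin m),
      b.repr (Φ (t, y)) (Fin.succ j) = y j := by
    intro t y j
    rw [show b.repr (Φ (t, y)) (Fin.succ j) = (⇑(b.repr (Φ (t, y)))) (Fin.succ j) from rfl,
      hrepr, ← Fin.zero_succAbove j, Fin.insertNth_apply_succAbove]
  -- the path is affine in t with direction z
  have hkey : ∀ (t : ℝ) (y : Fin m → ℝ), Φ (t, y) = Φ (0, y) + t • z := by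
    intro t y
    apply b.repr.injective
    have hz' : b.repr z = EuclideanSpace.single 0 1 := by
      rw [← hb0]; exact b.repr_self 0
    ext i
    rw [map_add, _root_.map_smul, PiLp.add_apply, PiLp.smul_apply, hz',
      EuclideanSpace.single_apply]
    rcases Fin.eq_zero_or_eq_succ i with rfl | ⟨j, rfl⟩
    · rw [hcoord0, hcoord0]; simp
    · rw [hcoordsucc, hcoordsucc]; simp [Fin.succ_ne_zero]
  -- MVT along the direction z
  have mono : ∀ (c : EuclideanSpace ℝ (Fin (m+1))) (t₁ t₂ : ℝ), t₁ ≤ t₂ →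
      c + t₁ • z ∈ D → c + t₂ • z ∈ D →
      δ * (t₂ - t₁) ≤ f (c + t₂ • z) - f (c + t₁ • z) := by
    intro c t₁ t₂ h12 h1 h2
    have hpath : ∀ t : ℝ, HasDerivAt (fun s : ℝ => c + s • z) z t := by
      intro t
      simpa using ((hasDerivAt_id t).smul_const z).const_add c
    set g : ℝ → ℝ := fun t => f (c + t • z) - δ * t with hgdef
    have hg' : ∀ t : ℝ, HasDerivAt g (fderiv ℝ f (c + t • z) z - δ) t := by
      intro t
      have hA := ((hf.differentiable one_ne_zero) (c + t • z)).hasFDerivAt.comp_hasDerivAt t (hpath t)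
      have hB : HasDerivAt (fun s : ℝ => δ * s) δ t := by
        simpa using (hasDerivAt_id t).const_mul δ
      exact hA.sub hB
    have hmem : ∀ t ∈ Set.Icc t₁ t₂, c + t • z ∈ closure (convexHull ℝ D) := by
      intro t ht
      rcases eq_or_lt_of_le h12 with rfl | hlt
      · obtain rfl : t = t₁ := le_antisymm ht.2 ht.1
        exact subset_closure (subset_convexHull ℝ D h1)
      · have hd : (0:ℝ) < t₂ - t₁ := by linarith
        set a := (t₂ - t) / (t₂ - t₁) with hadef
        set bb := (t - t₁) / (t₂ - t₁) with hbbdef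
        have ha : 0 ≤ a := div_nonneg (by linarith [ht.2]) hd.le
        have hbb : 0 ≤ bb := div_nonneg (by linarith [ht.1]) hd.le
        have hab : a + bb = 1 := by rw [hadef, hbbdef]; field_simp; ring
        have h3 : a * t₁ + bb * t₂ = t := by rw [hadef, hbbdef]; field_simp; ring
        have heq : c + t • z = a • (c + t₁ • z) + bb • (c + t₂ • z) := by
          have h4 : a • (c + t₁ • z) + bb • (c + t₂ • z)
              = (a + bb) • c + (a * t₁ + bb * t₂) • z := by module
          rw [h4, hab, h3, one_smul]
        rw [heq]
        exact subset_closure ((convex_convexHull ℝ D) (subset_convexHull ℝ D h1)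
          (subset_convexHull ℝ D h2) ha hbb hab)
    have hmono : MonotoneOn g (Set.Icc t₁ t₂) :=
      monotoneOn_of_deriv_nonneg (convex_Icc t₁ t₂)
        (fun t _ => (hg' t).continuousAt.continuousWithinAt)
        (fun t _ => (hg' t).differentiableAt.differentiableWithinAt)
        (fun t ht => by
          rw [(hg' t).deriv]
          have := hder _ (hmem t (interior_subset ht))
          linarith)
    have hfin := hmono (Set.left_mem_Icc.2 h12) (Set.right_mem_Icc.2 h12) h12
    simp only [hgdef] at hfin
    linarith
  -- measurability
  have hfc : Continuous f := hf.continuous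
  have hS : MeasurableSet {ρ ∈ D | |f ρ| < ε} := by
    have hrw : {ρ ∈ D | |f ρ| < ε} = D ∩ {ρ | |f ρ| < ε} := rfl
    rw [hrw]
    exact hDm.inter (measurableSet_lt hfc.abs.measurable measurable_const)
  rcases D.eq_empty_or_nonempty with rfl | ⟨ρ₀, hρ₀⟩
  · simp
  set y₀ : Fin m → ℝ := fun j => b.repr ρ₀ (Fin.succ j) with hy₀
  set B : Set (Fin m → ℝ) := Set.univ.pi fun j => Set.Icc (y₀ j - R) (y₀ j + R) with hBdef
  have hBmeas : MeasurableSet B := MeasurableSet.univ_pi fun j => measurableSet_Icc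
  have hpos : (0:ℝ) ≤ 2 * ε / δ := by positivity
  -- slice bound
  have hslice : ∀ y : Fin m → ℝ,
      volume {t : ℝ | Φ (t, y) ∈ {ρ ∈ D | |f ρ| < ε}} ≤ ENNReal.ofReal (2 * ε / δ) := by
    intro y
    refine le_trans (Real.volume_le_diam _) (EMetric.diam_le ?_)
    intro t₁ h₁ t₂ h₂
    rw [edist_dist]
    refine ENNReal.ofReal_le_ofReal ?_
    rw [Real.dist_eq]
    obtain ⟨hD₁, hf₁⟩ := h₁
    obtain ⟨hD₂, hf₂⟩ := h₂
    rw [hkey t₁ y] at hD₁ hf₁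
    rw [hkey t₂ y] at hD₂ hf₂
    obtain ⟨l₁, r₁⟩ := abs_lt.1 hf₁
    obtain ⟨l₂, r₂⟩ := abs_lt.1 hf₂
    rcases le_total t₁ t₂ with h | h
    · have hm := mono (Φ (0, y)) t₁ t₂ h hD₁ hD₂
      have h' : t₂ - t₁ ≤ 2 * ε / δ := by
        rw [le_div_iff₀ hδ]; nlinarith
      rw [abs_le]
      exact ⟨by linarith, by linarith⟩
    · have hm := mono (Φ (0, y)) t₂ t₁ h hD₂ hD₁
      have h' : t₁ - t₂ ≤ 2 * ε / δ := by
        rw [le_div_iff₀ hδ]; nlinarith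
      rw [abs_le]
      exact ⟨by linarith, by linarith⟩
  -- slices are empty outside the box B
  have hbox : ∀ (y : Fin m → ℝ) (t : ℝ), Φ (t, y) ∈ D → y ∈ B := by
    intro y t ht j _
    have hdist : dist (Φ (t, y)) ρ₀ ≤ R :=
      le_trans (Metric.dist_le_diam_of_mem hDb ht hρ₀) hDdiam
    have habs : |y j - y₀ j| ≤ R := by
      have heq : y j - y₀ j = b.repr (Φ (t, y) - ρ₀) (Fin.succ j) := by
        rw [_root_.map_sub, PiLp.sub_apply, hcoordsucc]
      rw [heq]
      calc |b.repr (Φ (t, y) - ρ₀) (Fin.succ j)| ≤ ‖b.repr (Φ (t, y) - ρ₀)‖ :=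
            euclid_abs_apply_le_norm _ _
        _ = ‖Φ (t, y) - ρ₀‖ := b.repr.norm_map _
        _ = dist (Φ (t, y)) ρ₀ := (dist_eq_norm _ _).symm
        _ ≤ R := hdist
    obtain ⟨l, r⟩ := abs_le.1 habs
    exact Set.mem_Icc.2 ⟨by linarith, by linarith⟩
  calc volume {ρ ∈ D | |f ρ| < ε}
      = (volume.prod volume) (Φ ⁻¹' {ρ ∈ D | |f ρ| < ε}) :=
        (hΦmp.measure_preimage hS.nullMeasurableSet).symm
    _ = ∫⁻ y, volume ((fun t => (t, y)) ⁻¹' (Φ ⁻¹' {ρ ∈ D | |f ρ| < ε})) ∂volume :=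
        Measure.prod_apply_symm (hΦmp.measurable hS)
    _ ≤ ∫⁻ y, B.indicator (fun _ => ENNReal.ofReal (2 * ε / δ)) y ∂volume := by
        refine lintegral_mono fun y => ?_
        by_cases hy : y ∈ B
        · rw [Set.indicator_of_mem hy]
          exact hslice y
        · rw [Set.indicator_of_notMem hy]
          have hempty : ((fun t => (t, y)) ⁻¹' (Φ ⁻¹' {ρ ∈ D | |f ρ| < ε})) = ∅ := by
            ext t
            simp only [Set.mem_preimage, Set.mem_empty_iff_false, iff_false]
            intro hmem
            exact hy (hbox y t hmem.1)
          rw [hempty]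
          simp
    _ = ENNReal.ofReal (2 * ε / δ) * volume B := lintegral_indicator_const hBmeas _
    _ ≤ ENNReal.ofReal (2 * (2 * R) ^ m * ε / δ) := by
        rw [hBdef, volume_pi_pi]
        have hv : ∀ j : Fin m, volume (Set.Icc (y₀ j - R) (y₀ j + R)) = ENNReal.ofReal (2*R) := by
          intro j; rw [Real.volume_Icc]; congr 1; ring
        simp only [hv]
        rw [Finset.prod_const, Finset.card_univ, Fintype.card_fin,
          ← ENNReal.ofReal_pow (by positivity), ← ENNReal.ofReal_mul hpos]
        exact ENNReal.ofReal_le_ofReal (le_of_eq (by ring))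
end

section
/- Let E be a Banach space, C > 0, ε > 0 with 8Cε² ≤ 1, and let X : B(0,4ε) → E be a locally Lipschitz map satisfying ‖X(z)‖ ≤ C‖z‖³ for all z in the open ball B(0,4ε) ⊆ E. Then for every z₀ ∈ E with ‖z₀‖ ≤ ε, the initial value problem φ'(t) = X(φ(t)), φ(0) = z₀ has a (unique) solution φ defined on the whole interval [0,1], and this solution satisfies ‖φ(s)‖ ≤ (1+s)‖z₀‖ ≤ 2‖z₀‖ and ‖φ(s) − z₀‖ ≤ 8C s ‖z₀‖³ for all s ∈ [0,1]. -/
open Set Metric Filter Topology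
open scoped Topology NNReal

section Aux
variable {E : Type*} [NormedAddCommGroup E] [NormedSpace ℝ E] [CompleteSpace E]
variable {C ε : ℝ} {X : E → E}

set_option linter.unusedSectionVars false
set_option linter.unusedVariables false
set_option maxHeartbeats 1600000



/-- From local Lipschitzness, get a closed ball around a point of the domain on which `X`
is Lipschitz and which is contained in the domain. -/
lemma bfb_lipball (hε : 0 < ε)
    (hlip : ∀ z ∈ Metric.ball (0 : E) (4 * ε),
      ∃ s ∈ nhdsWithin z (Metric.ball (0 : E) (4 * ε)), ∃ K : NNReal, LipschitzOnWith K X s)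
    {z₁ : E} (h : ‖z₁‖ < 4 * ε) :
    ∃ r > 0, ∃ K : NNReal, closedBall z₁ r ⊆ ball (0:E) (4*ε) ∧
      LipschitzOnWith K X (closedBall z₁ r) := by
  have hz₁ : z₁ ∈ ball (0:E) (4*ε) := mem_ball_zero_iff.2 h
  obtain ⟨s, hs, K, hK⟩ := hlip z₁ hz₁
  rw [(isOpen_ball).nhdsWithin_eq hz₁] at hs
  obtain ⟨ρ, hρ, hρs⟩ := Metric.mem_nhds_iff.1 hs
  refine ⟨min (ρ/2) ((4*ε - ‖z₁‖)/2), lt_min (half_pos hρ) (by linarith), K, ?_, ?_⟩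
  · intro x hx
    rw [mem_closedBall_iff_norm] at hx
    rw [mem_ball_zero_iff]
    have : ‖x‖ ≤ ‖z₁‖ + ‖x - z₁‖ := by
      calc ‖x‖ = ‖z₁ + (x - z₁)‖ := by congr 1; abel
      _ ≤ ‖z₁‖ + ‖x - z₁‖ := norm_add_le _ _
    have h2 : ‖x - z₁‖ ≤ (4*ε - ‖z₁‖)/2 := hx.trans (min_le_right _ _)
    linarith
  · refine hK.mono (subset_trans ?_ hρs)
    exact (closedBall_subset_ball (lt_of_le_of_lt (min_le_left _ _) (by linarith)))






/-- Uniform local existence: from any initial point in the half-ball, the ODE has a solution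
on a time interval of uniform length. -/
lemma bfb_locex (hC : 0 < C) (hε : 0 < ε)
    (hbound : ∀ z ∈ ball (0 : E) (4 * ε), ‖X z‖ ≤ C * ‖z‖ ^ 3)
    {z₁ : E} {r : ℝ} {K : NNReal} (hr : 0 < r)
    (hsub : closedBall z₁ r ⊆ ball (0:E) (4*ε))
    (hK : LipschitzOnWith K X (closedBall z₁ r))
    {b₀ : E} (hb₀ : b₀ ∈ closedBall z₁ (r/2)) (t₁ : ℝ) :
    ∃ f : ℝ → E, f t₁ = b₀ ∧
      ∀ t ∈ Ioo (t₁ - r/2/(64*C*ε^3+1)) (t₁ + r/2/(64*C*ε^3+1)),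
        HasDerivAt f (X (f t)) t := by
  set δ : ℝ := r/2/(64*C*ε^3+1) with hδdef
  have hδ : 0 < δ := by positivity
  have hsub2 : closedBall b₀ (r/2) ⊆ closedBall z₁ r := by
    apply closedBall_subset_closedBall'
    have := mem_closedBall.1 hb₀
    linarith
  have hpl : IsPicardLindelof (fun _ : ℝ => X) (tmin := t₁ - δ) (tmax := t₁ + δ)
      ⟨t₁, by constructor <;> linarith⟩ b₀ ⟨r/2, by positivity⟩ 0 ⟨64*C*ε^3, by positivity⟩ K := by
    constructor
    · exact fun t _ => hK.mono hsub2
    · exact fun x _ => continuousOn_const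
    · intro t _ x hx
      show ‖X x‖ ≤ 64*C*ε^3
      have hx4 : x ∈ ball (0:E) (4*ε) := hsub (hsub2 hx)
      have h1 : ‖X x‖ ≤ C * ‖x‖^3 := hbound x hx4
      have h2 : ‖x‖ ≤ 4*ε := le_of_lt (mem_ball_zero_iff.1 hx4)
      have h3 : ‖x‖^3 ≤ (4*ε)^3 := by
        exact pow_le_pow_left₀ (norm_nonneg _) h2 3
      nlinarith
    · show (64*C*ε^3) * max (t₁ + δ - t₁) (t₁ - (t₁ - δ)) ≤ r/2 - ((0:NNReal):ℝ)
      rw [NNReal.coe_zero, sub_zero]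
      have : max (t₁ + δ - t₁) (t₁ - (t₁ - δ)) = δ := by
        rw [add_sub_cancel_left]
        simp
      rw [this, hδdef, ← mul_div_assoc,
        div_le_iff₀ (by positivity : (0:ℝ) < 64*C*ε^3+1)]
      nlinarith [hr.le]
  obtain ⟨f, hf0, hf⟩ := hpl.exists_eq_forall_mem_Icc_hasDerivWithinAt (x := b₀)
    (mem_closedBall_self (by simp))
  refine ⟨f, hf0, fun t ht => ?_⟩
  exact (hf t (Ioo_subset_Icc_self ht)).hasDerivAt (Icc_mem_nhds ht.1 ht.2)







/-- A priori bootstrap bound for solutions of the ODE starting at `z₀ ≠ 0`. -/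
lemma bfb_apriori (hC : 0 < C) (hε : 0 < ε) (hsmall : 8 * C * ε ^ 2 ≤ 1)
    (hbound : ∀ z ∈ ball (0 : E) (4 * ε), ‖X z‖ ≤ C * ‖z‖ ^ 3)
    {z₀ : E} (hz₀ : ‖z₀‖ ≤ ε) (hz₀' : z₀ ≠ 0)
    {T : ℝ} (hT : T ≤ 9/8) {ψ : ℝ → E} (hψ0 : ψ 0 = z₀)
    (hψ : ∀ t ∈ Icc (0:ℝ) T, HasDerivAt ψ (X (ψ t)) t) :
    ∀ s ∈ Icc (0:ℝ) T, ‖ψ s‖ ≤ 17/10 * ‖z₀‖ ∧ ‖ψ s - z₀‖ ≤ 8 * C * s * ‖z₀‖ ^ 3 := by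
  have hcont : ContinuousOn ψ (Icc 0 T) := fun t ht => (hψ t ht).continuousAt.continuousWithinAt
  have hCε : C * ε^2 ≤ 1/8 := by linarith
  have hq : C * ε^3 ≤ ε/8 := by nlinarith
  have nz : 0 < ‖z₀‖ := norm_pos_iff.2 hz₀'
  have h2a : C * ‖z₀‖^2 ≤ 1/8 := by nlinarith [pow_le_pow_left₀ (norm_nonneg z₀) hz₀ 2]
  have hq2 : C * ‖z₀‖^3 ≤ ‖z₀‖/8 := by
    nlinarith [mul_le_mul_of_nonneg_right h2a (norm_nonneg z₀)]
  -- Stage 1 : the solution stays in the ball of radius 3ε/2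
  have hst1 : ∀ s ∈ Icc (0:ℝ) T, ‖ψ s‖ < 3/2 * ε := by
    by_contra hcon
    push_neg at hcon
    obtain ⟨s₀, hs₀, hs₀'⟩ := hcon
    set B : Set ℝ := {t ∈ Icc (0:ℝ) T | 3/2 * ε ≤ ‖ψ t‖} with hBdef
    have hBne : B.Nonempty := ⟨s₀, hs₀, hs₀'⟩
    have hBbdd : BddBelow B := ⟨0, fun t ht => ht.1.1⟩
    have hBclosed : IsClosed B :=
      hcont.preimage_isClosed_of_isClosed isClosed_Icc
        (isClosed_le continuous_const continuous_norm)
    set u := sInf B with hudef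
    have huB : u ∈ B := hBclosed.csInf_mem hBne hBbdd
    have hu0 : 0 < u := by
      rcases lt_or_eq_of_le huB.1.1 with h | h
      · exact h
      · exfalso
        have h2 := huB.2
        rw [← h, hψ0] at h2
        linarith
    have hIco : ∀ s ∈ Ico (0:ℝ) u, ‖ψ s‖ < 3/2 * ε := by
      intro s hs
      by_contra hcs
      push_neg at hcs
      exact (notMem_of_lt_csInf hs.2 hBbdd) ⟨⟨hs.1, hs.2.le.trans huB.1.2⟩, hcs⟩
    have hbd : ∀ t ∈ Ico (0:ℝ) u, ‖X (ψ t)‖ ≤ C * (3/2*ε)^3 := by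
      intro t ht
      have hs := hIco t ht
      have hmem : ψ t ∈ ball (0:E) (4*ε) := mem_ball_zero_iff.2 (by linarith)
      have h1 := hbound _ hmem
      have h3 : ‖ψ t‖^3 ≤ (3/2*ε)^3 := pow_le_pow_left₀ (norm_nonneg _) hs.le 3
      nlinarith
    have hder : ∀ t ∈ Icc (0:ℝ) u, HasDerivWithinAt ψ (X (ψ t)) (Icc 0 u) t :=
      fun t ht => (hψ t ⟨ht.1, ht.2.trans huB.1.2⟩).hasDerivWithinAt
    have hmvt := norm_image_sub_le_of_norm_deriv_le_segment' hder hbd u (right_mem_Icc.2 hu0.le)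
    rw [hψ0] at hmvt
    have h9 : u ≤ 9/8 := huB.1.2.trans hT
    have hprod : (C*ε^3)*u ≤ (ε/8)*(9/8) :=
      mul_le_mul hq h9 hu0.le (by positivity)
    have h1 : C*(3/2*ε)^3*(u - 0) ≤ (27/8)*((ε/8)*(9/8)) := by nlinarith
    have h2 := norm_sub_norm_le (ψ u) z₀
    have h3 := huB.2
    nlinarith
  -- Stage 2 : the solution stays in the ball of radius (17/10)‖z₀‖
  have hst2 : ∀ s ∈ Icc (0:ℝ) T, ‖ψ s‖ ≤ 17/10 * ‖z₀‖ := by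
    by_contra hcon
    push_neg at hcon
    obtain ⟨s₀, hs₀, hs₀'⟩ := hcon
    set B : Set ℝ := {t ∈ Icc (0:ℝ) T | 17/10 * ‖z₀‖ ≤ ‖ψ t‖} with hBdef
    have hBne : B.Nonempty := ⟨s₀, hs₀, hs₀'.le⟩
    have hBbdd : BddBelow B := ⟨0, fun t ht => ht.1.1⟩
    have hBclosed : IsClosed B :=
      hcont.preimage_isClosed_of_isClosed isClosed_Icc
        (isClosed_le continuous_const continuous_norm)
    set u := sInf B with hudef
    have huB : u ∈ B := hBclosed.csInf_mem hBne hBbdd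
    have hu0 : 0 < u := by
      rcases lt_or_eq_of_le huB.1.1 with h | h
      · exact h
      · exfalso
        have h2 := huB.2
        rw [← h, hψ0] at h2
        nlinarith
    have hIco : ∀ s ∈ Ico (0:ℝ) u, ‖ψ s‖ < 17/10 * ‖z₀‖ := by
      intro s hs
      by_contra hcs
      push_neg at hcs
      exact (notMem_of_lt_csInf hs.2 hBbdd) ⟨⟨hs.1, hs.2.le.trans huB.1.2⟩, hcs⟩
    have hbd : ∀ t ∈ Ico (0:ℝ) u, ‖X (ψ t)‖ ≤ C * (17/10*‖z₀‖)^3 := by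
      intro t ht
      have hs := hIco t ht
      have hs1 := hst1 t ⟨ht.1, ht.2.le.trans huB.1.2⟩
      have hmem : ψ t ∈ ball (0:E) (4*ε) := mem_ball_zero_iff.2 (by linarith)
      have h1 := hbound _ hmem
      have h3 : ‖ψ t‖^3 ≤ (17/10*‖z₀‖)^3 := pow_le_pow_left₀ (norm_nonneg _) hs.le 3
      nlinarith
    have hder : ∀ t ∈ Icc (0:ℝ) u, HasDerivWithinAt ψ (X (ψ t)) (Icc 0 u) t :=
      fun t ht => (hψ t ⟨ht.1, ht.2.trans huB.1.2⟩).hasDerivWithinAt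
    have hmvt := norm_image_sub_le_of_norm_deriv_le_segment' hder hbd u (right_mem_Icc.2 hu0.le)
    rw [hψ0] at hmvt
    have h9 : u ≤ 9/8 := huB.1.2.trans hT
    have hprod : (C*‖z₀‖^3)*u ≤ (‖z₀‖/8)*(9/8) :=
      mul_le_mul hq2 h9 hu0.le (by positivity)
    have h1 : C*(17/10*‖z₀‖)^3*(u - 0) ≤ (4913/1000)*((‖z₀‖/8)*(9/8)) := by nlinarith
    have h2 := norm_sub_norm_le (ψ u) z₀
    have h3 := huB.2
    nlinarith
  -- Stage 3 : conclusion
  intro s hs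
  have hT0 : (0:ℝ) ≤ T := hs.1.trans hs.2
  refine ⟨hst2 s hs, ?_⟩
  have hbd3 : ∀ t ∈ Ico (0:ℝ) T, ‖X (ψ t)‖ ≤ C * (17/10*‖z₀‖)^3 := by
    intro t ht
    have hs2 := hst2 t (Ico_subset_Icc_self ht)
    have hs1 := hst1 t (Ico_subset_Icc_self ht)
    have hmem : ψ t ∈ ball (0:E) (4*ε) := mem_ball_zero_iff.2 (by linarith)
    have h1 := hbound _ hmem
    have h3 : ‖ψ t‖^3 ≤ (17/10*‖z₀‖)^3 := pow_le_pow_left₀ (norm_nonneg _) hs2 3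
    nlinarith
  have hder3 : ∀ t ∈ Icc (0:ℝ) T, HasDerivWithinAt ψ (X (ψ t)) (Icc 0 T) t :=
    fun t ht => (hψ t ht).hasDerivWithinAt
  have hmvt := norm_image_sub_le_of_norm_deriv_le_segment' hder3 hbd3 s hs
  rw [hψ0] at hmvt
  have hs0 : 0 ≤ s := hs.1
  nlinarith [mul_le_mul_of_nonneg_left (mul_nonneg (mul_nonneg hC.le hs0) (pow_nonneg (norm_nonneg z₀) 3)) (by norm_num : (0:ℝ) ≤ 1)]


/-- Uniqueness of solutions of the ODE, given that the first solution stays in the domain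
where `X` is locally Lipschitz. -/
lemma bfb_uniq (hε : 0 < ε)
    (hlip : ∀ z ∈ Metric.ball (0 : E) (4 * ε),
      ∃ s ∈ nhdsWithin z (Metric.ball (0 : E) (4 * ε)), ∃ K : NNReal, LipschitzOnWith K X s)
    {a b : ℝ} (hab : a ≤ b) {φ ψ : ℝ → E}
    (hφ : ∀ t ∈ Icc a b, HasDerivAt φ (X (φ t)) t)
    (hφb : ∀ t ∈ Icc a b, ‖φ t‖ < 4 * ε)
    (hψ : ∀ t ∈ Icc a b, HasDerivAt ψ (X (ψ t)) t)
    (h0 : φ a = ψ a) :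
    EqOn φ ψ (Icc a b) := by
  set A : Set ℝ := {t ∈ Icc a b | EqOn φ ψ (Icc a t)} with hAdef
  have haA : a ∈ A := ⟨⟨le_refl a, hab⟩, fun t ht => by
    have : t = a := le_antisymm ht.2 ht.1
    rw [this]; exact h0⟩
  have hAne : A.Nonempty := ⟨a, haA⟩
  have hAbdd : BddAbove A := ⟨b, fun t ht => ht.1.2⟩
  set m := sSup A with hmdef
  have ham : a ≤ m := le_csSup hAbdd haA
  have hmb : m ≤ b := csSup_le hAne fun t ht => ht.1.2
  have hmIcc : m ∈ Icc a b := ⟨ham, hmb⟩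
  -- φ and ψ agree on [a, m]
  have hmA : EqOn φ ψ (Icc a m) := by
    intro s hs
    rcases lt_or_eq_of_le hs.2 with h | h
    · obtain ⟨t, htA, hst⟩ := exists_lt_of_lt_csSup hAne h
      exact htA.2 ⟨hs.1, hst.le⟩
    · -- s = m; use continuity
      rcases lt_or_eq_of_le hs.1 with h' | h'
      · have ham' : a < m := h ▸ h'
        have hφc : Tendsto φ (𝓝[<] m) (𝓝 (φ m)) :=
          ((hφ m hmIcc).continuousAt).continuousWithinAt
        have hψc : Tendsto ψ (𝓝[<] m) (𝓝 (ψ m)) :=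
          ((hψ m hmIcc).continuousAt).continuousWithinAt
        have hev : φ =ᶠ[𝓝[<] m] ψ := by
          have hIoo : Ioo a m ∈ 𝓝[<] m :=
            mem_nhdsWithin.2 ⟨Ioi a, isOpen_Ioi, ham', fun t ht => ⟨ht.1, ht.2⟩⟩
          filter_upwards [hIoo] with t ht
          obtain ⟨t', ht'A, htt'⟩ := exists_lt_of_lt_csSup hAne ht.2
          exact ht'A.2 ⟨ht.1.le, htt'.le⟩
        have hkey := tendsto_nhds_unique (hφc.congr' hev) hψc
        rw [h]; exact hkey
      · rw [← h']; exact h0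
  -- m = b, else we can extend the agreement
  rcases eq_or_lt_of_le hmb with hmb' | hmb'
  · rw [hmb'] at hmA; exact hmA
  exfalso
  have hz₁ : ‖φ m‖ < 4 * ε := hφb m hmIcc
  obtain ⟨r, hr, K, hsub, hK⟩ := bfb_lipball hε hlip hz₁
  have hψm : ψ m = φ m := (hmA ⟨ham, le_refl m⟩).symm
  -- continuity of φ and ψ at m
  obtain ⟨δ₁, hδ₁, hδ₁'⟩ := Metric.continuousAt_iff.1 (hφ m hmIcc).continuousAt r hr
  obtain ⟨δ₂, hδ₂, hδ₂'⟩ := Metric.continuousAt_iff.1 (hψ m hmIcc).continuousAt r hr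
  set δ := min δ₁ δ₂ with hδdef
  set m' := min b (m + δ/2) with hm'def
  have hmm' : m < m' := lt_min hmb' (by simp [hδdef]; constructor <;> linarith [lt_min hδ₁ hδ₂])
  have hm'b : m' ≤ b := min_le_left _ _
  have hmem : ∀ t ∈ Icc m m', φ t ∈ closedBall (φ m) r ∧ ψ t ∈ closedBall (φ m) r := by
    intro t ht
    have hd : dist t m < δ := by
      rw [Real.dist_eq, abs_of_nonneg (by linarith [ht.1])]
      have : t ≤ m + δ/2 := ht.2.trans (min_le_right _ _)
      have : 0 < δ := lt_min hδ₁ hδ₂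
      linarith [ht.2.trans (min_le_right _ _)]
    constructor
    · exact mem_closedBall.2 (le_of_lt (hδ₁' (lt_of_lt_of_le hd (min_le_left _ _))))
    · rw [← hψm]
      exact mem_closedBall.2 (le_of_lt (hδ₂' (lt_of_lt_of_le hd (min_le_right _ _))))
  have hext : EqOn φ ψ (Icc m m') := by
    have hv : ∀ t : ℝ, LipschitzOnWith K ((fun _ : ℝ => X) t)
        ((fun _ : ℝ => closedBall (φ m) r) t) := fun t => hK
    exact ODE_solution_unique_of_mem_Icc_right (fun t _ => hv t)
      (fun t ht => (hφ t ⟨ham.trans ht.1, ht.2.trans hm'b⟩).continuousAt.continuousWithinAt)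
      (fun t ht => (hφ t ⟨ham.trans ht.1, ht.2.le.trans hm'b⟩).hasDerivWithinAt)
      (fun t ht => (hmem t (Ico_subset_Icc_self ht)).1)
      (fun t ht => (hψ t ⟨ham.trans ht.1, ht.2.trans hm'b⟩).continuousAt.continuousWithinAt)
      (fun t ht => (hψ t ⟨ham.trans ht.1, ht.2.le.trans hm'b⟩).hasDerivWithinAt)
      (fun t ht => (hmem t (Ico_subset_Icc_self ht)).2)
      hψm.symm
  have hm'A : m' ∈ A := by
    refine ⟨⟨ham.trans hmm'.le, hm'b⟩, ?_⟩
    rw [← Icc_union_Icc_eq_Icc ham hmm'.le]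
    exact hmA.union hext
  exact absurd (le_csSup hAbdd hm'A) (not_le.2 hmm')



theorem birkhoff_flow_bootstrap'
    (hC : 0 < C) (hε : 0 < ε) (hsmall : 8 * C * ε ^ 2 ≤ 1)
    (hlip : ∀ z ∈ Metric.ball (0 : E) (4 * ε),
      ∃ s ∈ nhdsWithin z (Metric.ball (0 : E) (4 * ε)), ∃ K : NNReal, LipschitzOnWith K X s)
    (hbound : ∀ z ∈ Metric.ball (0 : E) (4 * ε), ‖X z‖ ≤ C * ‖z‖ ^ 3)
    (z₀ : E) (hz₀ : ‖z₀‖ ≤ ε) (hz : z₀ ≠ 0) :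
    ∃ φ : ℝ → E, φ 0 = z₀ ∧
      (∀ t ∈ Set.Icc (0 : ℝ) 1, HasDerivAt φ (X (φ t)) t) ∧
      (∀ s ∈ Set.Icc (0 : ℝ) 1,
        ‖φ s‖ ≤ (1 + s) * ‖z₀‖ ∧ (1 + s) * ‖z₀‖ ≤ 2 * ‖z₀‖ ∧
        ‖φ s - z₀‖ ≤ 8 * C * s * ‖z₀‖ ^ 3) ∧
      (∀ ψ : ℝ → E, ψ 0 = z₀ → (∀ t ∈ Set.Icc (0 : ℝ) 1, HasDerivAt ψ (X (ψ t)) t) →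
        Set.EqOn φ ψ (Set.Icc (0 : ℝ) 1)) := by
  classical
  have nz : 0 < ‖z₀‖ := norm_pos_iff.2 hz
  set sol : ℝ → (ℝ → E) → Prop :=
    fun T ψ => ψ 0 = z₀ ∧ ∀ t ∈ Icc (0:ℝ) T, HasDerivAt ψ (X (ψ t)) t with hsoldef
  set S : Set ℝ := {T | T ∈ Icc (0:ℝ) (9/8) ∧ ∃ ψ, sol T ψ} with hSdef
  -- S contains a positive element, via local existence at z₀
  have hz4 : ‖z₀‖ < 4 * ε := by linarith
  obtain ⟨r₀, hr₀, K₀, hsub₀, hK₀⟩ := bfb_lipball hε hlip hz4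
  set δ₀ : ℝ := r₀/2/(64*C*ε^3+1) with hδ₀def
  have hδ₀ : 0 < δ₀ := by positivity
  obtain ⟨f₀, hf₀0, hf₀⟩ := bfb_locex hC hε hbound hr₀ hsub₀ hK₀
    (mem_closedBall_self (by positivity) : z₀ ∈ closedBall z₀ (r₀/2)) 0
  set T₀ : ℝ := min (δ₀/2) (9/8) with hT₀def
  have hT₀pos : 0 < T₀ := lt_min (by positivity) (by norm_num)
  have hT₀S : T₀ ∈ S := by
    refine ⟨⟨hT₀pos.le, min_le_right _ _⟩, f₀, hf₀0, fun t ht => ?_⟩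
    refine hf₀ t ⟨?_, ?_⟩
    · have := ht.1; simp only [zero_sub]; linarith
    · have h1 : t ≤ δ₀/2 := ht.2.trans (min_le_left _ _)
      simp only [zero_add]; linarith
  have hSne : S.Nonempty := ⟨T₀, hT₀S⟩
  have hSbdd : BddAbove S := ⟨9/8, fun T hT => hT.1.2⟩
  set m : ℝ := sSup S with hmdef
  have hT₀m : T₀ ≤ m := le_csSup hSbdd hT₀S
  have hm0 : 0 < m := lt_of_lt_of_le hT₀pos hT₀m
  have hm98 : m ≤ 9/8 := csSup_le hSne fun T hT => hT.1.2
  -- every T < m admits a solution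
  have hSmem : ∀ T, 0 ≤ T → T < m → ∃ ψ, sol T ψ := by
    intro T h1 h2
    obtain ⟨T', hT'S, hTT'⟩ := exists_lt_of_lt_csSup hSne h2
    obtain ⟨ψ, hψ1, hψ2⟩ := hT'S.2
    exact ⟨ψ, hψ1, fun t ht => hψ2 t ⟨ht.1, ht.2.trans hTT'.le⟩⟩
  set σ : ℝ → ℝ → E :=
    fun T => if h : ∃ ψ, sol T ψ then Classical.choose h else fun _ => z₀ with hσdef
  have hσ : ∀ T, 0 ≤ T → T < m → sol T (σ T) := by
    intro T h1 h2
    have h := hSmem T h1 h2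
    simp only [hσdef, dif_pos h]
    exact Classical.choose_spec h
  -- the chosen solutions agree on common intervals
  have huniq : ∀ T₁ T₂, 0 ≤ T₁ → T₁ < m → T₂ < m → T₁ ≤ T₂ →
      EqOn (σ T₁) (σ T₂) (Icc 0 T₁) := by
    intro T₁ T₂ h10 h1m h2m h12
    have h20 : 0 ≤ T₂ := h10.trans h12
    have hb1 := bfb_apriori hC hε hsmall hbound hz₀ hz (h1m.le.trans hm98)
      (hσ T₁ h10 h1m).1 (hσ T₁ h10 h1m).2
    refine bfb_uniq hε hlip h10 (hσ T₁ h10 h1m).2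
      (fun t ht => by have := (hb1 t ht).1; linarith)
      (fun t ht => (hσ T₂ h20 h2m).2 t ⟨ht.1, ht.2.trans h12⟩) ?_
    rw [(hσ T₁ h10 h1m).1, (hσ T₂ h20 h2m).1]
  -- the glued maximal solution
  set Φ : ℝ → E := fun t => σ ((max t 0 + m)/2) t with hΦdef
  have hmax : ∀ t : ℝ, 0 ≤ t → t < m → (0 ≤ (max t 0 + m)/2 ∧ (max t 0 + m)/2 < m ∧
      t ≤ (max t 0 + m)/2) := by
    intro t h0 hm
    rw [max_eq_left h0]
    refine ⟨by linarith, by linarith, by linarith⟩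
  have hΦeq : ∀ T, 0 ≤ T → T < m → ∀ t ∈ Icc (0:ℝ) T, Φ t = σ T t := by
    intro T hT0 hTm t ht
    obtain ⟨ha, hb, hc⟩ := hmax t ht.1 (lt_of_le_of_lt ht.2 hTm)
    rcases le_total ((max t 0 + m)/2) T with h | h
    · exact huniq _ T ha hb hTm h ⟨ht.1, hc⟩
    · exact (huniq T _ hT0 hTm hb h ⟨ht.1, ht.2⟩).symm
  have hΦ0 : Φ 0 = z₀ := by
    have h1 : (0:ℝ) ∈ Icc (0:ℝ) (m/2) := ⟨le_refl 0, by linarith⟩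
    have h2 := hΦeq (m/2) (by linarith) (by linarith) 0 h1
    rw [h2, (hσ (m/2) (by linarith) (by linarith)).1]
  have hΦderiv : ∀ t, 0 ≤ t → t < m → HasDerivAt Φ (X (Φ t)) t := by
    intro t ht0 htm
    rcases eq_or_lt_of_le ht0 with h0 | h0
    · -- t = 0 : Φ agrees with σ (m/2) on Iio (m/2)
      have hIio : ∀ s ∈ Iio (m/2), Φ s = σ (m/2) s := by
        intro s hs
        rcases lt_or_ge s 0 with hs0 | hs0
        · simp only [hΦdef, max_eq_right hs0.le, zero_add]
        · exact hΦeq (m/2) (by linarith) (by linarith) s ⟨hs0, le_of_lt hs⟩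
      have hd := (hσ (m/2) (by linarith) (by linarith)).2 0 ⟨le_refl 0, by linarith⟩
      have hev : Φ =ᶠ[𝓝 (0:ℝ)] σ (m/2) := by
        filter_upwards [isOpen_Iio.mem_nhds (show (0:ℝ) ∈ Iio (m/2) by
          simp only [mem_Iio]; linarith)] with s hs
        exact hIio s hs
      have := hd.congr_of_eventuallyEq hev
      rw [← h0]
      convert this using 2
      exact hIio 0 (by simp only [mem_Iio]; linarith)
    · -- 0 < t
      set T' : ℝ := (t + m)/2 with hT'def
      have h1 : t < T' := by simp only [hT'def]; linarith
      have h2 : T' < m := by simp only [hT'def]; linarith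
      have h3 : 0 ≤ T' := by simp only [hT'def]; linarith
      have hIoo : ∀ s ∈ Ioo (0:ℝ) T', Φ s = σ T' s :=
        fun s hs => hΦeq T' h3 h2 s ⟨hs.1.le, hs.2.le⟩
      have hd := (hσ T' h3 h2).2 t ⟨ht0, h1.le⟩
      have hev : Φ =ᶠ[𝓝 t] σ T' := by
        filter_upwards [isOpen_Ioo.mem_nhds (show t ∈ Ioo (0:ℝ) T' from ⟨h0, h1⟩)] with s hs
        exact hIoo s hs
      have := hd.congr_of_eventuallyEq hev
      convert this using 2
      exact hIoo t ⟨h0, h1⟩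
  have hΦbound : ∀ t, 0 ≤ t → t < m →
      ‖Φ t‖ ≤ 17/10 * ‖z₀‖ ∧ ‖Φ t - z₀‖ ≤ 8 * C * t * ‖z₀‖ ^ 3 := by
    intro t ht0 htm
    set T' : ℝ := (t + m)/2 with hT'def
    have h1 : t ≤ T' := by simp only [hT'def]; linarith
    have h2 : T' < m := by simp only [hT'def]; linarith
    have h3 : 0 ≤ T' := by simp only [hT'def]; linarith
    have hb := bfb_apriori hC hε hsmall hbound hz₀ hz (h2.le.trans hm98)
      (hσ T' h3 h2).1 (hσ T' h3 h2).2 t ⟨ht0, h1⟩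
    rw [hΦeq T' h3 h2 t ⟨ht0, h1⟩]
    exact hb
  -- m = 9/8 by a continuation argument
  have hm98' : m = 9/8 := by
    by_contra hne
    have hlt : m < 9/8 := lt_of_le_of_ne hm98 hne
    -- Lipschitz estimate for Φ on [0, m)
    have hLip : ∀ p q, 0 ≤ p → p ≤ q → q < m → ‖Φ q - Φ p‖ ≤ 5*C*‖z₀‖^3*(q-p) := by
      intro p q hp hpq hqm
      have hder : ∀ t ∈ Icc p q, HasDerivWithinAt Φ (X (Φ t)) (Icc p q) t :=
        fun t ht => (hΦderiv t (hp.trans ht.1) (lt_of_le_of_lt ht.2 hqm)).hasDerivWithinAt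
      have hbd : ∀ t ∈ Ico p q, ‖X (Φ t)‖ ≤ C * (17/10*‖z₀‖)^3 := by
        intro t ht
        have hb := (hΦbound t (hp.trans ht.1) (lt_of_lt_of_le ht.2 hqm.le)).1
        have hmem : Φ t ∈ ball (0:E) (4*ε) := mem_ball_zero_iff.2 (by linarith)
        have h1 := hbound _ hmem
        have h3 : ‖Φ t‖^3 ≤ (17/10*‖z₀‖)^3 := pow_le_pow_left₀ (norm_nonneg _) hb 3
        nlinarith
      have := norm_image_sub_le_of_norm_deriv_le_segment' hder hbd q (right_mem_Icc.2 hpq)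
      nlinarith [this, mul_nonneg (mul_nonneg hC.le (pow_nonneg (norm_nonneg z₀) 3))
        (sub_nonneg.2 hpq)]
    -- the Cauchy sequence approaching m
    set u : ℕ → ℝ := fun n => m - m*(1/2)^n with hudef
    have hu0 : ∀ n, 0 ≤ u n := by
      intro n
      have h1 : ((1:ℝ)/2)^n ≤ 1 := pow_le_one₀ (by norm_num) (by norm_num)
      simp only [hudef]
      nlinarith
    have hum : ∀ n, u n < m := by
      intro n
      have h1 : (0:ℝ) < (1/2)^n := by positivity
      simp only [hudef]
      nlinarith
    have humono : ∀ n, u n ≤ u (n+1) := by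
      intro n
      have h1 : ((1:ℝ)/2)^(n+1) ≤ (1/2)^n :=
        pow_le_pow_of_le_one (by norm_num) (by norm_num) (Nat.le_succ n)
      simp only [hudef]
      nlinarith
    have hcauchy : CauchySeq (fun n => Φ (u n)) := by
      apply cauchySeq_of_le_geometric (1/2) (5*C*‖z₀‖^3*m) (by norm_num)
      intro n
      rw [dist_eq_norm, norm_sub_rev]
      have h1 := hLip (u n) (u (n+1)) (hu0 n) (humono n) (hum (n+1))
      have h2 : u (n+1) - u n = m * (1/2)^(n+1) := by
        simp only [hudef]; ring
      rw [h2] at h1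
      have h3 : m * (1/2:ℝ)^(n+1) ≤ m * (1/2)^n :=
        mul_le_mul_of_nonneg_left (pow_le_pow_of_le_one (by norm_num) (by norm_num)
          (Nat.le_succ n)) hm0.le
      calc ‖Φ (u (n+1)) - Φ (u n)‖ ≤ 5*C*‖z₀‖^3*(m * (1/2)^(n+1)) := h1
        _ ≤ 5*C*‖z₀‖^3*m * (1/2)^n := by nlinarith [mul_nonneg (mul_nonneg hC.le
            (pow_nonneg (norm_nonneg z₀) 3)) (le_of_lt hm0)]
    obtain ⟨L, hL⟩ := cauchySeq_tendsto_of_complete hcauchy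
    have hLnorm : ‖L‖ ≤ 17/10 * ‖z₀‖ :=
      le_of_tendsto' (hL.norm) (fun n => (hΦbound (u n) (hu0 n) (hum n)).1)
    have hL4 : ‖L‖ < 4*ε := by linarith
    obtain ⟨r, hr, K, hsubL, hKL⟩ := bfb_lipball hε hlip hL4
    set δ' : ℝ := r/2/(64*C*ε^3+1) with hδ'def
    have hδ' : 0 < δ' := by positivity
    -- pick a time t₁ close to m with Φ t₁ close to L
    have htend : Tendsto (fun n : ℕ => m*(1/2:ℝ)^n) atTop (𝓝 0) := by
      simpa using (tendsto_pow_atTop_nhds_zero_of_lt_one (by norm_num : (0:ℝ) ≤ 1/2)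
        (by norm_num : (1/2:ℝ) < 1)).const_mul m
    obtain ⟨n, hn1, hn2⟩ := ((htend.eventually (gt_mem_nhds (show 0 < δ'/2 by positivity))).and
      (hL.eventually (Metric.ball_mem_nhds L (show 0 < r/2 by positivity)))).exists
    set t₁ : ℝ := u n with ht₁def
    have ht₁0 : 0 ≤ t₁ := hu0 n
    have ht₁m : t₁ < m := hum n
    have ht₁close : m - t₁ < δ'/2 := by
      have : m - t₁ = m*(1/2)^n := by simp only [ht₁def, hudef]; ring
      rw [this]; exact hn1
    have hΦt₁ : Φ t₁ ∈ closedBall L (r/2) := ball_subset_closedBall hn2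
    obtain ⟨g, hg0, hg⟩ := bfb_locex hC hε hbound hr hsubL hKL hΦt₁ t₁
    simp only [← hδ'def] at hg
    clear_value δ'
    set T' : ℝ := min (9/8) (t₁ + δ'/2) with hT'def
    have hT'm : m < T' := lt_min hlt (by linarith)
    have hT'up : T' ≤ t₁ + δ'/2 := min_le_right _ _
    have hT'0 : 0 ≤ T' := le_min (by norm_num) (by linarith)
    have hT'98 : T' ≤ 9/8 := min_le_left _ _
    clear_value t₁ T'
    set Ψ : ℝ → E := fun t => if t < t₁ then Φ t else g t with hΨdef
    have hgIci : ∀ s, t₁ ≤ s → Ψ s = g s := fun s hs => by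
      simp only [hΨdef]; rw [if_neg (not_lt.2 hs)]
    have hΦIio : ∀ s, s < t₁ → Ψ s = Φ s := fun s hs => by
      simp only [hΨdef]; rw [if_pos hs]
    have hΨ0 : Ψ 0 = z₀ := by
      rcases lt_or_ge (0:ℝ) t₁ with h | h
      · rw [hΦIio 0 h, hΦ0]
      · have ht₁eq : t₁ = 0 := le_antisymm h ht₁0
        rw [hgIci 0 (le_of_eq ht₁eq), ← ht₁eq, hg0, ht₁eq, hΦ0]
    have hΨderiv : ∀ t ∈ Icc (0:ℝ) T', HasDerivAt Ψ (X (Ψ t)) t := by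
      intro t ht
      rcases lt_trichotomy t t₁ with hlt' | heq' | hgt'
      · have hd := hΦderiv t ht.1 (lt_trans hlt' ht₁m)
        have hev : Ψ =ᶠ[𝓝 t] Φ := by
          filter_upwards [isOpen_Iio.mem_nhds (show t ∈ Iio t₁ from hlt')] with s hs
          exact hΦIio s hs
        have h2 := hd.congr_of_eventuallyEq hev
        convert h2 using 2
        exact hΦIio t hlt'
      · rw [heq'] at ht ⊢
        rw [hgIci t₁ (le_refl t₁), hg0]
        have h2L : ∀ y ∈ Iic t₁, Ψ y = Φ y := by
          intro y hy
          rcases lt_or_eq_of_le (mem_Iic.1 hy) with h | h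
          · exact hΦIio y h
          · rw [h, hgIci t₁ (le_refl t₁), hg0]
        have hleft : HasDerivWithinAt Ψ (X (Φ t₁)) (Iic t₁) t₁ :=
          ((hΦderiv t₁ ht₁0 ht₁m).hasDerivWithinAt (s := Iic t₁)).congr h2L
            (h2L t₁ (mem_Iic.2 (le_refl t₁)))
        have hdg := hg t₁ ⟨by linarith, by linarith⟩
        rw [hg0] at hdg
        have hright : HasDerivWithinAt Ψ (X (Φ t₁)) (Ici t₁) t₁ :=
          (hdg.hasDerivWithinAt (s := Ici t₁)).congr (fun y hy => hgIci y (mem_Ici.1 hy))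
            (hgIci t₁ (le_refl t₁))
        have hu := hleft.union hright
        rw [Iic_union_Ici] at hu
        exact hasDerivWithinAt_univ.1 hu
      · have htu : t ≤ t₁ + δ'/2 := le_trans ht.2 hT'up
        have hd := hg t ⟨by linarith, by linarith⟩
        have hev : Ψ =ᶠ[𝓝 t] g := by
          filter_upwards [isOpen_Ioi.mem_nhds (show t ∈ Ioi t₁ from hgt')] with s hs
          exact hgIci s (le_of_lt hs)
        have h2 := hd.congr_of_eventuallyEq hev
        convert h2 using 2
        exact hgIci t hgt'.le
    have hT'S : T' ∈ S := ⟨⟨hT'0, hT'98⟩, Ψ, hΨ0, hΨderiv⟩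
    exact absurd (le_csSup hSbdd hT'S) (not_le.2 hT'm)
  have hlt1 : ∀ t : ℝ, t ≤ 1 → t < m := fun t ht =>
    lt_of_le_of_lt ht (by rw [hm98']; norm_num)
  refine ⟨Φ, hΦ0, ?_, ?_, ?_⟩
  · intro t ht
    exact hΦderiv t ht.1 (hlt1 t ht.2)
  · intro s hs
    obtain ⟨h1, h2⟩ := hΦbound s hs.1 (hlt1 s hs.2)
    have h3 := norm_sub_norm_le (Φ s) z₀
    have h2a : C * ‖z₀‖^2 ≤ 1/8 := by nlinarith [pow_le_pow_left₀ (norm_nonneg z₀) hz₀ 2]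
    have h4 : 8*C*s*‖z₀‖^3 ≤ s*‖z₀‖ := by
      nlinarith [mul_le_mul_of_nonneg_right h2a (mul_nonneg hs.1 (norm_nonneg z₀))]
    refine ⟨by nlinarith, by nlinarith [hs.2, norm_nonneg z₀], h2⟩
  · intro ψ hψ0 hψd
    refine bfb_uniq hε hlip zero_le_one (fun t ht => hΦderiv t ht.1 (hlt1 t ht.2)) ?_ hψd ?_
    · intro t ht
      have := (hΦbound t ht.1 (hlt1 t ht.2)).1
      linarith
    · rw [hΦ0, hψ0]


end Aux

/-- Bootstrap flow estimate. If `X` is locally Lipschitz on the ball `B(0, 4ε)`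
of a Banach space `E`, satisfies `‖X z‖ ≤ C ‖z‖³` there, and `8 C ε² ≤ 1`, then for every
`z₀` with `‖z₀‖ ≤ ε` the initial value problem `φ' = X ∘ φ`, `φ 0 = z₀` has a solution on all
of `[0, 1]`, unique there, satisfying `‖φ s‖ ≤ (1 + s) ‖z₀‖ ≤ 2 ‖z₀‖` and
`‖φ s − z₀‖ ≤ 8 C s ‖z₀‖³` for `s ∈ [0, 1]`. -/
theorem birkhoff_flow_bootstrap
    (E : Type*) [NormedAddCommGroup E] [NormedSpace ℝ E] [CompleteSpace E]
    (C ε : ℝ) (hC : 0 < C) (hε : 0 < ε) (hsmall : 8 * C * ε ^ 2 ≤ 1)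
    (X : E → E)
    (hlip : ∀ z ∈ Metric.ball (0 : E) (4 * ε),
      ∃ s ∈ nhdsWithin z (Metric.ball (0 : E) (4 * ε)), ∃ K : NNReal, LipschitzOnWith K X s)
    (hbound : ∀ z ∈ Metric.ball (0 : E) (4 * ε), ‖X z‖ ≤ C * ‖z‖ ^ 3)
    (z₀ : E) (hz₀ : ‖z₀‖ ≤ ε) :
    ∃ φ : ℝ → E, φ 0 = z₀ ∧
      (∀ t ∈ Set.Icc (0 : ℝ) 1, HasDerivAt φ (X (φ t)) t) ∧
      (∀ s ∈ Set.Icc (0 : ℝ) 1,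
        ‖φ s‖ ≤ (1 + s) * ‖z₀‖ ∧ (1 + s) * ‖z₀‖ ≤ 2 * ‖z₀‖ ∧
        ‖φ s - z₀‖ ≤ 8 * C * s * ‖z₀‖ ^ 3) ∧
      (∀ ψ : ℝ → E, ψ 0 = z₀ → (∀ t ∈ Set.Icc (0 : ℝ) 1, HasDerivAt ψ (X (ψ t)) t) →
        Set.EqOn φ ψ (Set.Icc (0 : ℝ) 1)) := by
  classical
  by_cases hzz : z₀ = 0
  · subst hzz
    have hX0 : X 0 = 0 := by
      have h0mem : (0:E) ∈ Metric.ball (0:E) (4*ε) := Metric.mem_ball_self (by positivity)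
      have h := hbound 0 h0mem
      simp only [norm_zero] at h
      exact norm_le_zero_iff.1 (by simpa using h)
    refine ⟨fun _ => 0, rfl, ?_, ?_, ?_⟩
    · intro t ht
      simpa [hX0] using hasDerivAt_const t (0:E)
    · intro s hs
      simp only [norm_zero, sub_zero, mul_zero]
      norm_num
    · intro ψ hψ0 hψd
      exact bfb_uniq hε hlip zero_le_one (φ := fun _ => (0:E))
        (fun t ht => by simpa [hX0] using hasDerivAt_const t (0:E))
        (fun t ht => by simpa using (by positivity : (0:ℝ) < 4*ε)) hψd (by rw [hψ0])
  · exact birkhoff_flow_bootstrap' hC hε hsmall hlip hbound z₀ hz₀ hzz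
end

section
/- Let ν > 0 and ρ₁, ρ₂ ∈ [1,2], and let M be the 4×4 complex matrix M = −iν · [[ρ₁−ρ₂, 0, 0, √(ρ₁ρ₂)], [0, ρ₂−ρ₁, √(ρ₁ρ₂), 0], [0, −√(ρ₁ρ₂), ρ₂−ρ₁, 0], [−√(ρ₁ρ₂), 0, 0, ρ₁−ρ₂]]. Then the set of eigenvalues of M is exactly {ε·ν√(ρ₁ρ₂) + σ·iν(ρ₂−ρ₁) : ε, σ ∈ {−1, +1}}, and every eigenvalue λ of M has nonzero real part; in fact |Re λ| = ν√(ρ₁ρ₂) ≥ ν. (Hence the linearized system around the torus has hyperbolic directions, so the torus is linearly unstable.) -/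
set_option maxHeartbeats 1000000


/-- With `ν > 0` and `ρ₁, ρ₂ ∈ [1,2]`, the set of eigenvalues of the matrix
`M = −iν·[[ρ₁−ρ₂,0,0,√(ρ₁ρ₂)],[0,ρ₂−ρ₁,√(ρ₁ρ₂),0],[0,−√(ρ₁ρ₂),ρ₂−ρ₁,0],[−√(ρ₁ρ₂),0,0,ρ₁−ρ₂]]`
is exactly `{ε·ν√(ρ₁ρ₂) + σ·iν(ρ₂−ρ₁) : ε, σ ∈ {−1,+1}}`, and every eigenvalue has nonzero
real part; in fact `|Re λ| = ν√(ρ₁ρ₂) ≥ ν` (linear instability of the torus). -/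
theorem hyperbolic_matrix_spectrum (ν ρ₁ ρ₂ : ℝ) (hν : 0 < ν)
    (h₁ : ρ₁ ∈ Set.Icc (1 : ℝ) 2) (h₂ : ρ₂ ∈ Set.Icc (1 : ℝ) 2) :
    spectrum ℂ
      ((-Complex.I * (ν : ℂ)) •
        (!![(ρ₁ : ℂ) - ρ₂, 0, 0, (Real.sqrt (ρ₁ * ρ₂) : ℂ);
           0, (ρ₂ : ℂ) - ρ₁, (Real.sqrt (ρ₁ * ρ₂) : ℂ), 0;
           0, -(Real.sqrt (ρ₁ * ρ₂) : ℂ), (ρ₂ : ℂ) - ρ₁, 0;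
           -(Real.sqrt (ρ₁ * ρ₂) : ℂ), 0, 0, (ρ₁ : ℂ) - ρ₂] :
         Matrix (Fin 4) (Fin 4) ℂ)) =
      {l : ℂ | ∃ e s : ℝ, (e = 1 ∨ e = -1) ∧ (s = 1 ∨ s = -1) ∧
        l = ((e * (ν * Real.sqrt (ρ₁ * ρ₂)) : ℝ) : ℂ) +
          (s : ℂ) * Complex.I * (ν : ℂ) * ((ρ₂ : ℂ) - ρ₁)} ∧
    ∀ l ∈ spectrum ℂ
      ((-Complex.I * (ν : ℂ)) •
        (!![(ρ₁ : ℂ) - ρ₂, 0, 0, (Real.sqrt (ρ₁ * ρ₂) : ℂ);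
           0, (ρ₂ : ℂ) - ρ₁, (Real.sqrt (ρ₁ * ρ₂) : ℂ), 0;
           0, -(Real.sqrt (ρ₁ * ρ₂) : ℂ), (ρ₂ : ℂ) - ρ₁, 0;
           -(Real.sqrt (ρ₁ * ρ₂) : ℂ), 0, 0, (ρ₁ : ℂ) - ρ₂] :
         Matrix (Fin 4) (Fin 4) ℂ)),
      l.re ≠ 0 ∧ |l.re| = ν * Real.sqrt (ρ₁ * ρ₂) ∧ ν ≤ ν * Real.sqrt (ρ₁ * ρ₂) := by
  obtain ⟨h1l, h1r⟩ := h₁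
  obtain ⟨h2l, h2r⟩ := h₂
  set S : ℝ := Real.sqrt (ρ₁ * ρ₂) with hSdef
  have hS1 : 1 ≤ S := by
    rw [hSdef, show (1:ℝ) = Real.sqrt 1 from (Real.sqrt_one).symm]
    exact Real.sqrt_le_sqrt (by nlinarith)
  have hνS : 0 < ν * S := by nlinarith
  set M : Matrix (Fin 4) (Fin 4) ℂ :=
    ((-Complex.I * (ν : ℂ)) •
      (!![(ρ₁ : ℂ) - ρ₂, 0, 0, (S : ℂ);
         0, (ρ₂ : ℂ) - ρ₁, (S : ℂ), 0;
         0, -(S : ℂ), (ρ₂ : ℂ) - ρ₁, 0;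
         -(S : ℂ), 0, 0, (ρ₁ : ℂ) - ρ₂] :
       Matrix (Fin 4) (Fin 4) ℂ)) with hM
  have hdet : ∀ l : ℂ, Matrix.det ((algebraMap ℂ (Matrix (Fin 4) (Fin 4) ℂ)) l - M) =
      ((l - (((ν*S:ℝ):ℂ) + Complex.I * ν * ((ρ₂:ℂ) - ρ₁))) *
       (l - (-((ν*S:ℝ):ℂ) + Complex.I * ν * ((ρ₂:ℂ) - ρ₁)))) *
      ((l - (((ν*S:ℝ):ℂ) - Complex.I * ν * ((ρ₂:ℂ) - ρ₁))) *
       (l - (-((ν*S:ℝ):ℂ) - Complex.I * ν * ((ρ₂:ℂ) - ρ₁)))) := by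
    intro l
    have h2 : (Complex.I)^2 = -1 := Complex.I_sq
    have h3 : (Complex.I)^3 = -Complex.I := by rw [pow_succ, h2]; ring
    have h4 : (Complex.I)^4 = 1 := by rw [pow_succ, h3]; simp [Complex.I_mul_I]
    rw [hM]
    simp [Matrix.det_succ_row_zero, Fin.sum_univ_succ, Matrix.algebraMap_matrix_apply,
      Matrix.cons_val_succ, Matrix.cons_val_zero, Matrix.one_apply, show (Fin.succAbove 3 2 : Fin 4) = 2 from rfl,
      show (Fin.castSucc 2 : Fin 4) = 2 from rfl, Matrix.cons_val_two, Matrix.cons_val_three,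
      Matrix.cons_val_one, Matrix.head_cons, Matrix.tail_cons]
    ring_nf
    simp only [h2, h3, h4]
    ring
  have hmem : ∀ l : ℂ, l ∈ spectrum ℂ M ↔
      ((l - (((ν*S:ℝ):ℂ) + Complex.I * ν * ((ρ₂:ℂ) - ρ₁))) *
       (l - (-((ν*S:ℝ):ℂ) + Complex.I * ν * ((ρ₂:ℂ) - ρ₁)))) *
      ((l - (((ν*S:ℝ):ℂ) - Complex.I * ν * ((ρ₂:ℂ) - ρ₁))) *
       (l - (-((ν*S:ℝ):ℂ) - Complex.I * ν * ((ρ₂:ℂ) - ρ₁)))) = 0 := by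
    intro l
    rw [spectrum.mem_iff, Matrix.isUnit_iff_isUnit_det, isUnit_iff_ne_zero, not_ne_iff, hdet]
  have hspec : spectrum ℂ M =
      {l : ℂ | ∃ e s : ℝ, (e = 1 ∨ e = -1) ∧ (s = 1 ∨ s = -1) ∧
        l = ((e * (ν * S) : ℝ) : ℂ) + (s : ℂ) * Complex.I * (ν : ℂ) * ((ρ₂ : ℂ) - ρ₁)} := by
    ext l
    rw [hmem l, Set.mem_setOf_eq]
    constructor
    · intro h
      rcases mul_eq_zero.1 h with h' | h' <;> rcases mul_eq_zero.1 h' with h'' | h'' <;>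
        rw [sub_eq_zero] at h''
      · exact ⟨1, 1, Or.inl rfl, Or.inl rfl, by rw [h'']; push_cast; ring⟩
      · exact ⟨-1, 1, Or.inr rfl, Or.inl rfl, by rw [h'']; push_cast; ring⟩
      · exact ⟨1, -1, Or.inl rfl, Or.inr rfl, by rw [h'']; push_cast; ring⟩
      · exact ⟨-1, -1, Or.inr rfl, Or.inr rfl, by rw [h'']; push_cast; ring⟩
    · rintro ⟨e, s, (rfl | rfl), (rfl | rfl), rfl⟩
      · exact mul_eq_zero_of_left (mul_eq_zero_of_left (by push_cast; ring) _) _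
      · exact mul_eq_zero_of_right _ (mul_eq_zero_of_left (by push_cast; ring) _)
      · exact mul_eq_zero_of_left (mul_eq_zero_of_right _ (by push_cast; ring)) _
      · exact mul_eq_zero_of_right _ (mul_eq_zero_of_right _ (by push_cast; ring))
  refine ⟨hspec, ?_⟩
  intro l hl
  rw [hspec] at hl
  obtain ⟨e, s, he, hs, rfl⟩ := hl
  have hre : (((e * (ν * S) : ℝ) : ℂ) +
      (s : ℂ) * Complex.I * (ν : ℂ) * ((ρ₂ : ℂ) - ρ₁)).re = e * (ν * S) := by
    simp [Complex.add_re, Complex.mul_re, Complex.mul_im, Complex.I_re, Complex.I_im,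
      Complex.sub_re, Complex.sub_im, Complex.ofReal_re, Complex.ofReal_im]
  rw [hre]
  have hle : ν ≤ ν * S := le_mul_of_one_le_right hν.le hS1
  rcases he with rfl | rfl
  · refine ⟨by simpa using hνS.ne', ?_, hle⟩
    rw [one_mul, abs_of_pos hνS]
  · refine ⟨by simpa using hνS.ne', ?_, hle⟩
    rw [neg_one_mul, abs_neg, abs_of_pos hνS]
end

section
/- Let ν > 0 and ρ₁, ρ₂ ∈ [1,2], and let M be the 4×4 complex matrix M = −iν · [[ρ₁−ρ₂, 0, 0, √(ρ₁ρ₂)], [0, ρ₂−ρ₁, √(ρ₁ρ₂), 0], [0, −√(ρ₁ρ₂), ρ₂−ρ₁, 0], [−√(ρ₁ρ₂), 0, 0, ρ₁−ρ₂]]. Then M is diagonalizable over ℂ; in particular, when ρ₁ = ρ₂ the two eigenvalues ±ν√(ρ₁ρ₂) are each double eigenvalues and M is still diagonalizable. -/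
open Polynomial

private lemma charpoly_aux (c : ℂ) : (!![0,0,0,c;0,0,c,0;0,-c,0,0;-c,0,0,0] :
    Matrix (Fin 4) (Fin 4) ℂ).charpoly = (X^2 + C (c^2))^2 := by
  rw [Matrix.charpoly]
  have h : Matrix.charmatrix (!![0,0,0,c;0,0,c,0;0,-c,0,0;-c,0,0,0] :
      Matrix (Fin 4) (Fin 4) ℂ) =
      !![X,0,0,-C c; 0,X,-C c,0; 0,C c,X,0; C c,0,0,X] := by
    ext i j
    fin_cases i <;> fin_cases j <;>
      simp [Matrix.charmatrix_apply_eq, Matrix.charmatrix_apply_ne,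
        Matrix.vecHead, Matrix.vecTail]
  rw [h]
  simp [Matrix.det_succ_row_zero, Fin.sum_univ_succ, Fin.succAbove,
    Fin.castSucc, Fin.castAdd, Fin.castLE, Fin.succ]
  ring

/-- With `ν > 0` and `ρ₁, ρ₂ ∈ [1,2]`, the matrix
`M = −iν·[[ρ₁−ρ₂,0,0,√(ρ₁ρ₂)],[0,ρ₂−ρ₁,√(ρ₁ρ₂),0],[0,−√(ρ₁ρ₂),ρ₂−ρ₁,0],[−√(ρ₁ρ₂),0,0,ρ₁−ρ₂]]`
is diagonalizable over `ℂ` (i.e. `M = P D P⁻¹` with `P` invertible and `D` diagonal); in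
particular, when `ρ₁ = ρ₂` the two eigenvalues `±ν√(ρ₁ρ₂)` are each double eigenvalues
(the characteristic polynomial is `(λ − ν√(ρ₁ρ₂))²(λ + ν√(ρ₁ρ₂))²`) and `M` is still
diagonalizable. -/
theorem hyperbolic_matrix_diagonalizable (ν ρ₁ ρ₂ : ℝ) (hν : 0 < ν)
    (h₁ : ρ₁ ∈ Set.Icc (1 : ℝ) 2) (h₂ : ρ₂ ∈ Set.Icc (1 : ℝ) 2) :
    (∃ P Dg : Matrix (Fin 4) (Fin 4) ℂ, IsUnit P ∧ Dg.IsDiag ∧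
      ((-Complex.I * (ν : ℂ)) •
        (!![(ρ₁ : ℂ) - ρ₂, 0, 0, (Real.sqrt (ρ₁ * ρ₂) : ℂ);
           0, (ρ₂ : ℂ) - ρ₁, (Real.sqrt (ρ₁ * ρ₂) : ℂ), 0;
           0, -(Real.sqrt (ρ₁ * ρ₂) : ℂ), (ρ₂ : ℂ) - ρ₁, 0;
           -(Real.sqrt (ρ₁ * ρ₂) : ℂ), 0, 0, (ρ₁ : ℂ) - ρ₂] :
         Matrix (Fin 4) (Fin 4) ℂ)) = P * Dg * P⁻¹) ∧
    (ρ₁ = ρ₂ →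
      ((-Complex.I * (ν : ℂ)) •
        (!![(ρ₁ : ℂ) - ρ₂, 0, 0, (Real.sqrt (ρ₁ * ρ₂) : ℂ);
           0, (ρ₂ : ℂ) - ρ₁, (Real.sqrt (ρ₁ * ρ₂) : ℂ), 0;
           0, -(Real.sqrt (ρ₁ * ρ₂) : ℂ), (ρ₂ : ℂ) - ρ₁, 0;
           -(Real.sqrt (ρ₁ * ρ₂) : ℂ), 0, 0, (ρ₁ : ℂ) - ρ₂] :
         Matrix (Fin 4) (Fin 4) ℂ)).charpoly =
        (X - Polynomial.C ((ν * Real.sqrt (ρ₁ * ρ₂) : ℝ) : ℂ)) ^ 2 *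
          (X + Polynomial.C ((ν * Real.sqrt (ρ₁ * ρ₂) : ℝ) : ℂ)) ^ 2) := by
  set s : ℂ := (Real.sqrt (ρ₁ * ρ₂) : ℂ) with hs
  set d : ℂ := (ρ₁ : ℂ) - ρ₂ with hd
  set M : Matrix (Fin 4) (Fin 4) ℂ :=
    ((-Complex.I * (ν : ℂ)) •
      (!![d, 0, 0, s; 0, -d, s, 0; 0, -s, -d, 0; -s, 0, 0, d] :
        Matrix (Fin 4) (Fin 4) ℂ)) with hM
  have hMeq : ((-Complex.I * (ν : ℂ)) •
      (!![(ρ₁ : ℂ) - ρ₂, 0, 0, s; 0, (ρ₂ : ℂ) - ρ₁, s, 0;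
          0, -s, (ρ₂ : ℂ) - ρ₁, 0; -s, 0, 0, (ρ₁ : ℂ) - ρ₂] :
        Matrix (Fin 4) (Fin 4) ℂ)) = M := by
    rw [hM]
    congr 1
    ext i j
    fin_cases i <;> fin_cases j <;> simp [hd] <;> ring
  constructor
  · -- diagonalization
    set I := Complex.I
    refine ⟨!![1, 1, 0, 0; 0, 0, 1, 1; 0, 0, I, -I; I, -I, 0, 0],
      Matrix.diagonal ![(ν : ℂ) * s - I * ν * d, -(ν : ℂ) * s - I * ν * d,
        (ν : ℂ) * s + I * ν * d, -(ν : ℂ) * s + I * ν * d], ?_, ?_, ?_⟩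
    · rw [Matrix.isUnit_iff_isUnit_det, isUnit_iff_ne_zero]
      have : (!![1, 1, 0, 0; 0, 0, 1, 1; 0, 0, I, -I; I, -I, 0, 0] :
          Matrix (Fin 4) (Fin 4) ℂ).det = -4 := by
        rw [Matrix.det_succ_row_zero]
        simp [Fin.sum_univ_succ, Matrix.det_fin_three, Fin.succAbove, I]
        ring_nf
      rw [this]; norm_num
    · exact Matrix.isDiag_diagonal _
    · rw [hMeq]
      set P : Matrix (Fin 4) (Fin 4) ℂ :=
        !![1, 1, 0, 0; 0, 0, 1, 1; 0, 0, I, -I; I, -I, 0, 0] with hP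
      set Dg : Matrix (Fin 4) (Fin 4) ℂ :=
        Matrix.diagonal ![(ν : ℂ) * s - I * ν * d, -(ν : ℂ) * s - I * ν * d,
          (ν : ℂ) * s + I * ν * d, -(ν : ℂ) * s + I * ν * d] with hDg
      have hdet : IsUnit P.det := by
        have : P.det = -4 := by
          rw [hP]
          rw [Matrix.det_succ_row_zero]
          simp [Fin.sum_univ_succ, Matrix.det_fin_three, Fin.succAbove, I]
          ring_nf
        rw [this]; norm_num
      have key : M * P = P * Dg := by
        ext i j
        fin_cases i <;> fin_cases j <;>
          simp [hM, hP, hDg, Matrix.mul_apply, Fin.sum_univ_four,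
            Matrix.diagonal, I] <;>
          first
            | ring1
            | (ring_nf; rw [Complex.I_sq]; ring)
      calc M = M * (P * P⁻¹) := by rw [Matrix.mul_nonsing_inv P hdet, Matrix.mul_one]
        _ = (M * P) * P⁻¹ := by rw [Matrix.mul_assoc]
        _ = P * Dg * P⁻¹ := by rw [key]
  · -- charpoly when ρ₁ = ρ₂
    intro hρ
    rw [hMeq]
    have hd0 : d = 0 := by rw [hd, hρ]; ring
    set c : ℂ := -Complex.I * (ν : ℂ) * s with hc
    have hM' : M = !![0,0,0,c;0,0,c,0;0,-c,0,0;-c,0,0,0] := by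
      rw [hM, hd0]
      ext i j
      fin_cases i <;> fin_cases j <;> simp [hc, Matrix.vecHead, Matrix.vecTail] <;> ring
    rw [hM', charpoly_aux]
    have hca : c ^ 2 = -(((ν * Real.sqrt (ρ₁ * ρ₂) : ℝ) : ℂ) ^ 2) := by
      rw [hc, hs]
      push_cast
      ring_nf
      rw [Complex.I_sq]
      ring
    rw [hca, map_neg, map_pow]
    ring
end

section
/- Fix p, q ∈ ℤ and ν > 0, and define Ω : ℝ² → ℝ² by Ω(ρ₁, ρ₂) = (p² + νρ₂, q² + νρ₁). Then for every k = (k₁,k₂) ∈ ℤ²∖{0}, the directional derivative of ρ ↦ Ω(ρ)·k along the unit vector 𝔷 = (k₂, k₁)/‖k‖ equals ν‖k‖, where ‖k‖ is the Euclidean norm. Moreover, for any real numbers m, m', any functions Λ, Λ' each of one of the forms ρ ↦ m + νρ₁ or ρ ↦ m + νρ₂, and either choice of sign ±, the directional derivative of ρ ↦ Ω(ρ)·k + Λ(ρ) ± Λ'(ρ) along 𝔷 is at least ν(‖k‖ − 2); in particular it is at least ν whenever ‖k‖ ≥ 3. -/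
lemma fd_aff (a b c : ℝ) (ρ v : ℝ × ℝ) :
    fderiv ℝ (fun ρ : ℝ × ℝ => a * ρ.1 + b * ρ.2 + c) ρ v = a * v.1 + b * v.2 := by
  have h : HasFDerivAt (fun ρ : ℝ × ℝ => a * ρ.1 + b * ρ.2 + c)
      (a • ContinuousLinearMap.fst ℝ ℝ ℝ + b • ContinuousLinearMap.snd ℝ ℝ ℝ) ρ := by
    have h1 := (hasFDerivAt_fst (𝕜 := ℝ) (p := ρ)).const_mul a
    have h2 := (hasFDerivAt_snd (𝕜 := ℝ) (p := ρ)).const_mul b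
    simpa using (h1.add h2).add_const c
  rw [h.fderiv]; simp

lemma aux_bound (ν s x y : ℝ) (hν : 0 < ν) (hx : -1 ≤ x) (hy : -1 ≤ y) :
    ν * (s - 2) ≤ ν * s + ν * x + ν * y ∧ (3 ≤ s → ν ≤ ν * s + ν * x + ν * y) := by
  constructor
  · nlinarith
  · intro h3; nlinarith

/-- For `Ω(ρ) = (p² + νρ₂, q² + νρ₁)` and `k ∈ ℤ²∖{0}`, the directional
derivative of `ρ ↦ Ω(ρ)·k` along the unit vector `𝔷 = (k₂, k₁)/‖k‖` equals `ν‖k‖`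
(Euclidean norm). Moreover, for any `Λ, Λ'` of the forms `ρ ↦ m + νρ₁` or `ρ ↦ m + νρ₂`
and either sign `e = ±1`, the directional derivative of `ρ ↦ Ω(ρ)·k + Λ(ρ) + e·Λ'(ρ)`
along `𝔷` is at least `ν(‖k‖ − 2)`; in particular it is at least `ν` when `‖k‖ ≥ 3`. -/
theorem transversality_hypothesis_A2 (p q : ℤ) (ν : ℝ) (hν : 0 < ν)
    (k₁ k₂ : ℤ) (hk : ¬(k₁ = 0 ∧ k₂ = 0)) :
    (∀ ρ : ℝ × ℝ,
      fderiv ℝ (fun ρ : ℝ × ℝ =>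
          ((p : ℝ) ^ 2 + ν * ρ.2) * (k₁ : ℝ) + ((q : ℝ) ^ 2 + ν * ρ.1) * (k₂ : ℝ)) ρ
        ((k₂ : ℝ) / Real.sqrt ((k₁ : ℝ) ^ 2 + (k₂ : ℝ) ^ 2),
         (k₁ : ℝ) / Real.sqrt ((k₁ : ℝ) ^ 2 + (k₂ : ℝ) ^ 2)) =
      ν * Real.sqrt ((k₁ : ℝ) ^ 2 + (k₂ : ℝ) ^ 2)) ∧
    ∀ (m m' : ℝ) (Λ Λ' : ℝ × ℝ → ℝ),
      ((Λ = fun ρ => m + ν * ρ.1) ∨ (Λ = fun ρ => m + ν * ρ.2)) →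
      ((Λ' = fun ρ => m' + ν * ρ.1) ∨ (Λ' = fun ρ => m' + ν * ρ.2)) →
      ∀ e : ℝ, (e = 1 ∨ e = -1) → ∀ ρ : ℝ × ℝ,
        ν * (Real.sqrt ((k₁ : ℝ) ^ 2 + (k₂ : ℝ) ^ 2) - 2) ≤
          fderiv ℝ (fun ρ : ℝ × ℝ =>
              ((p : ℝ) ^ 2 + ν * ρ.2) * (k₁ : ℝ) + ((q : ℝ) ^ 2 + ν * ρ.1) * (k₂ : ℝ) +
                Λ ρ + e * Λ' ρ) ρ
            ((k₂ : ℝ) / Real.sqrt ((k₁ : ℝ) ^ 2 + (k₂ : ℝ) ^ 2),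
             (k₁ : ℝ) / Real.sqrt ((k₁ : ℝ) ^ 2 + (k₂ : ℝ) ^ 2)) ∧
        (3 ≤ Real.sqrt ((k₁ : ℝ) ^ 2 + (k₂ : ℝ) ^ 2) →
          ν ≤ fderiv ℝ (fun ρ : ℝ × ℝ =>
              ((p : ℝ) ^ 2 + ν * ρ.2) * (k₁ : ℝ) + ((q : ℝ) ^ 2 + ν * ρ.1) * (k₂ : ℝ) +
                Λ ρ + e * Λ' ρ) ρ
            ((k₂ : ℝ) / Real.sqrt ((k₁ : ℝ) ^ 2 + (k₂ : ℝ) ^ 2),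
             (k₁ : ℝ) / Real.sqrt ((k₁ : ℝ) ^ 2 + (k₂ : ℝ) ^ 2))) := by
  set s : ℝ := Real.sqrt ((k₁ : ℝ) ^ 2 + (k₂ : ℝ) ^ 2) with hs
  have hpos0 : 0 < (k₁ : ℝ) ^ 2 + (k₂ : ℝ) ^ 2 := by
    rcases eq_or_ne k₁ 0 with h | h
    · subst h
      have h2 : k₂ ≠ 0 := fun h2 => hk ⟨rfl, h2⟩
      have h2' : (k₂ : ℝ) ≠ 0 := Int.cast_ne_zero.2 h2
      positivity
    · have h1 : (k₁ : ℝ) ≠ 0 := Int.cast_ne_zero.2 h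
      positivity
  have hspos : 0 < s := Real.sqrt_pos.2 hpos0
  have hs2 : s * s = (k₁ : ℝ) ^ 2 + (k₂ : ℝ) ^ 2 := Real.mul_self_sqrt hpos0.le
  set u1 : ℝ := (k₁ : ℝ) / s with hu1
  set u2 : ℝ := (k₂ : ℝ) / s with hu2
  have hk1 : (k₁ : ℝ) = u1 * s := by rw [hu1, div_mul_cancel₀ _ hspos.ne']
  have hk2 : (k₂ : ℝ) = u2 * s := by rw [hu2, div_mul_cancel₀ _ hspos.ne']
  have hkey : (k₂ : ℝ) * u2 + (k₁ : ℝ) * u1 = s := by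
    rw [hk1, hk2]
    have : (u2 * s) * u2 + (u1 * s) * u1 = (u1 * u1 + u2 * u2) * s := by ring
    rw [this]
    have hsum : u1 * u1 + u2 * u2 = 1 := by
      have : (u1 * s) ^ 2 + (u2 * s) ^ 2 = s * s := by rw [← hk1, ← hk2, hs2]
      have hs0 : s ≠ 0 := ne_of_gt hspos
      field_simp at this ⊢
      nlinarith [this]
    rw [hsum, one_mul]
  have hb1 : -1 ≤ u1 ∧ u1 ≤ 1 := by
    constructor <;> nlinarith [hk1, hs2, sq_nonneg ((k₂ : ℝ)), sq_nonneg (u1 - 1), sq_nonneg (u1 + 1), hspos, sq_nonneg ((k₁:ℝ) - s), sq_nonneg ((k₁:ℝ) + s)]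
  have hb2 : -1 ≤ u2 ∧ u2 ≤ 1 := by
    constructor <;> nlinarith [hk2, hs2, sq_nonneg ((k₁ : ℝ)), hspos, sq_nonneg ((k₂:ℝ) - s), sq_nonneg ((k₂:ℝ) + s)]
  constructor
  · intro ρ
    rw [show (fun ρ : ℝ × ℝ =>
          ((p : ℝ) ^ 2 + ν * ρ.2) * (k₁ : ℝ) + ((q : ℝ) ^ 2 + ν * ρ.1) * (k₂ : ℝ)) =
        (fun ρ : ℝ × ℝ => (ν * (k₂ : ℝ)) * ρ.1 + (ν * (k₁ : ℝ)) * ρ.2 +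
          ((p : ℝ) ^ 2 * (k₁ : ℝ) + (q : ℝ) ^ 2 * (k₂ : ℝ))) from funext fun ρ => by ring,
      fd_aff]
    linear_combination ν * hkey
  · intro m m' Λ Λ' hΛ hΛ' e he ρ
    obtain ⟨hb1l, hb1r⟩ := hb1
    obtain ⟨hb2l, hb2r⟩ := hb2
    have heb1 : -1 ≤ e * u1 ∧ e * u1 ≤ 1 := by
      rcases he with rfl | rfl <;> constructor <;> linarith
    have heb2 : -1 ≤ e * u2 ∧ e * u2 ≤ 1 := by
      rcases he with rfl | rfl <;> constructor <;> linarith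
    rcases hΛ with rfl | rfl <;> rcases hΛ' with rfl | rfl
    · rw [show (fun ρ : ℝ × ℝ =>
            ((p : ℝ) ^ 2 + ν * ρ.2) * (k₁ : ℝ) + ((q : ℝ) ^ 2 + ν * ρ.1) * (k₂ : ℝ) +
              (m + ν * ρ.1) + e * (m' + ν * ρ.1)) =
          (fun ρ : ℝ × ℝ => (ν * (k₂ : ℝ) + ν + e * ν) * ρ.1 + (ν * (k₁ : ℝ)) * ρ.2 +
            ((p : ℝ) ^ 2 * (k₁ : ℝ) + (q : ℝ) ^ 2 * (k₂ : ℝ) + m + e * m')) from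
          funext fun ρ => by ring, fd_aff]
      have hval : (ν * (k₂ : ℝ) + ν + e * ν) * u2 + (ν * (k₁ : ℝ)) * u1 = ν * s + ν * u2 + ν * (e * u2) := by
        linear_combination ν * hkey
      rw [hval]
      exact aux_bound ν s u2 (e * u2) hν hb2l heb2.1
    · rw [show (fun ρ : ℝ × ℝ =>
            ((p : ℝ) ^ 2 + ν * ρ.2) * (k₁ : ℝ) + ((q : ℝ) ^ 2 + ν * ρ.1) * (k₂ : ℝ) +
              (m + ν * ρ.1) + e * (m' + ν * ρ.2)) =
          (fun ρ : ℝ × ℝ => (ν * (k₂ : ℝ) + ν) * ρ.1 + (ν * (k₁ : ℝ) + e * ν) * ρ.2 +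
            ((p : ℝ) ^ 2 * (k₁ : ℝ) + (q : ℝ) ^ 2 * (k₂ : ℝ) + m + e * m')) from
          funext fun ρ => by ring, fd_aff]
      have hval : (ν * (k₂ : ℝ) + ν) * u2 + (ν * (k₁ : ℝ) + e * ν) * u1 = ν * s + ν * u2 + ν * (e * u1) := by
        linear_combination ν * hkey
      rw [hval]
      exact aux_bound ν s u2 (e * u1) hν hb2l heb1.1
    · rw [show (fun ρ : ℝ × ℝ =>
            ((p : ℝ) ^ 2 + ν * ρ.2) * (k₁ : ℝ) + ((q : ℝ) ^ 2 + ν * ρ.1) * (k₂ : ℝ) +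
              (m + ν * ρ.2) + e * (m' + ν * ρ.1)) =
          (fun ρ : ℝ × ℝ => (ν * (k₂ : ℝ) + e * ν) * ρ.1 + (ν * (k₁ : ℝ) + ν) * ρ.2 +
            ((p : ℝ) ^ 2 * (k₁ : ℝ) + (q : ℝ) ^ 2 * (k₂ : ℝ) + m + e * m')) from
          funext fun ρ => by ring, fd_aff]
      have hval : (ν * (k₂ : ℝ) + e * ν) * u2 + (ν * (k₁ : ℝ) + ν) * u1 = ν * s + ν * u1 + ν * (e * u2) := by
        linear_combination ν * hkey
      rw [hval]
      exact aux_bound ν s u1 (e * u2) hν hb1l heb2.1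
    · rw [show (fun ρ : ℝ × ℝ =>
            ((p : ℝ) ^ 2 + ν * ρ.2) * (k₁ : ℝ) + ((q : ℝ) ^ 2 + ν * ρ.1) * (k₂ : ℝ) +
              (m + ν * ρ.2) + e * (m' + ν * ρ.2)) =
          (fun ρ : ℝ × ℝ => (ν * (k₂ : ℝ)) * ρ.1 + (ν * (k₁ : ℝ) + ν + e * ν) * ρ.2 +
            ((p : ℝ) ^ 2 * (k₁ : ℝ) + (q : ℝ) ^ 2 * (k₂ : ℝ) + m + e * m')) from
          funext fun ρ => by ring, fd_aff]
      have hval : (ν * (k₂ : ℝ)) * u2 + (ν * (k₁ : ℝ) + ν + e * ν) * u1 = ν * s + ν * u1 + ν * (e * u1) := by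
        linear_combination ν * hkey
      rw [hval]
      exact aux_bound ν s u1 (e * u1) hν hb1l heb1.1
end

section
/- Fix p, q ∈ ℤ and ν > 0, and define Ω : ℝ² → ℝ² by Ω(ρ₁, ρ₂) = (p² + νρ₂, q² + νρ₁). Let k = (−2, 2) or k = (2, −2), and let 𝔷 = (k₂, k₁)/‖k‖ (Euclidean norm). Then for any real numbers m, m' and any functions Λ, Λ' each of one of the forms ρ ↦ m + νρ₁ or ρ ↦ m + νρ₂, the directional derivative of ρ ↦ Ω(ρ)·k + Λ(ρ) − Λ'(ρ) along 𝔷 is at least √2·ν at every point ρ ∈ ℝ². -/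
lemma fderiv_affine (a b c : ℝ) (ρ v : ℝ × ℝ) :
    fderiv ℝ (fun x : ℝ × ℝ => a * x.1 + b * x.2 + c) ρ v = a * v.1 + b * v.2 := by
  have h : HasFDerivAt (fun x : ℝ × ℝ => a * x.1 + b * x.2 + c)
      (a • ContinuousLinearMap.fst ℝ ℝ ℝ + b • ContinuousLinearMap.snd ℝ ℝ ℝ) ρ :=
    ((hasFDerivAt_fst.const_mul a).add (hasFDerivAt_snd.const_mul b)).add_const c
  rw [h.fderiv]
  simp

lemma key_affine (A B C : ℝ) (ρ v : ℝ × ℝ) (F : ℝ × ℝ → ℝ)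
    (hF : ∀ x, F x = A * x.1 + B * x.2 + C) :
    fderiv ℝ F ρ v = A * v.1 + B * v.2 := by
  have h : F = fun x : ℝ × ℝ => A * x.1 + B * x.2 + C := funext hF
  rw [h, fderiv_affine]

lemma sqrt8 : Real.sqrt 8 = 2 * Real.sqrt 2 := by
  rw [show (8:ℝ) = 2^2 * 2 by norm_num, Real.sqrt_mul (by positivity),
    Real.sqrt_sq (by norm_num)]

/-- For `Ω(ρ) = (p² + νρ₂, q² + νρ₁)` and the exceptional vectors
`k = (−2, 2)` or `k = (2, −2)`, with `𝔷 = (k₂, k₁)/‖k‖` (Euclidean norm), the directional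
derivative of `ρ ↦ Ω(ρ)·k + Λ(ρ) − Λ'(ρ)` along `𝔷` is at least `√2·ν` at every `ρ ∈ ℝ²`,
for any `Λ, Λ'` of the forms `ρ ↦ m + νρ₁` or `ρ ↦ m + νρ₂`. -/
theorem transversality_exceptional_k (p q : ℤ) (ν : ℝ) (hν : 0 < ν)
    (k₁ k₂ : ℤ) (hk : (k₁ = -2 ∧ k₂ = 2) ∨ (k₁ = 2 ∧ k₂ = -2)) :
    ∀ (m m' : ℝ) (Λ Λ' : ℝ × ℝ → ℝ),
      ((Λ = fun ρ => m + ν * ρ.1) ∨ (Λ = fun ρ => m + ν * ρ.2)) →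
      ((Λ' = fun ρ => m' + ν * ρ.1) ∨ (Λ' = fun ρ => m' + ν * ρ.2)) →
      ∀ ρ : ℝ × ℝ,
        Real.sqrt 2 * ν ≤
          fderiv ℝ (fun ρ : ℝ × ℝ =>
              ((p : ℝ) ^ 2 + ν * ρ.2) * (k₁ : ℝ) + ((q : ℝ) ^ 2 + ν * ρ.1) * (k₂ : ℝ) +
                Λ ρ - Λ' ρ) ρ
            ((k₂ : ℝ) / Real.sqrt ((k₁ : ℝ) ^ 2 + (k₂ : ℝ) ^ 2),
             (k₁ : ℝ) / Real.sqrt ((k₁ : ℝ) ^ 2 + (k₂ : ℝ) ^ 2)) := by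
  intro m m' Λ Λ' hΛ hΛ' ρ
  have hs : Real.sqrt 2 * Real.sqrt 2 = 2 := Real.mul_self_sqrt (by norm_num)
  rcases hk with ⟨rfl, rfl⟩ | ⟨rfl, rfl⟩ <;>
    rcases hΛ with rfl | rfl <;> rcases hΛ' with rfl | rfl <;>
    push_cast <;>
    [ rw [key_affine (2*ν) (-(2*ν)) ((p:ℝ)^2*(-2)+(q:ℝ)^2*2+m-m') _ _ _
        (fun x => by ring)];
      rw [key_affine (3*ν) (-(3*ν)) ((p:ℝ)^2*(-2)+(q:ℝ)^2*2+m-m') _ _ _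
        (fun x => by ring)];
      rw [key_affine (1*ν) (-(1*ν)) ((p:ℝ)^2*(-2)+(q:ℝ)^2*2+m-m') _ _ _
        (fun x => by ring)];
      rw [key_affine (2*ν) (-(2*ν)) ((p:ℝ)^2*(-2)+(q:ℝ)^2*2+m-m') _ _ _
        (fun x => by ring)];
      rw [key_affine (-(2*ν)) (2*ν) ((p:ℝ)^2*2+(q:ℝ)^2*(-2)+m-m') _ _ _
        (fun x => by ring)];
      rw [key_affine (-(1*ν)) (1*ν) ((p:ℝ)^2*2+(q:ℝ)^2*(-2)+m-m') _ _ _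
        (fun x => by ring)];
      rw [key_affine (-(3*ν)) (3*ν) ((p:ℝ)^2*2+(q:ℝ)^2*(-2)+m-m') _ _ _
        (fun x => by ring)];
      rw [key_affine (-(2*ν)) (2*ν) ((p:ℝ)^2*2+(q:ℝ)^2*(-2)+m-m') _ _ _
        (fun x => by ring)]] <;>
    norm_num [sqrt8] <;>
    rw [show (-2:ℝ)/(2*Real.sqrt 2) = -(Real.sqrt 2/2) from by
        rw [div_eq_iff (by positivity)]; nlinarith,
      show (2:ℝ)/(2*Real.sqrt 2) = Real.sqrt 2/2 from by
        rw [div_eq_iff (by positivity)]; nlinarith] <;>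
    nlinarith [mul_pos hν (Real.sqrt_pos.mpr (by norm_num : (0:ℝ) < 2))]
end
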